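/- arXiv:2111.09236 — 4 statements merged into one kernel-verified Lean document; each statement's English description precedes it below -/
import Mathlib

section
/- If H₁ and H₂ are connected graphs, each with at least 3 vertices and at least 2 edges, which share exactly one vertex and have no edges between them, then m₂(H₁ ∪ H₂) ≤ max{m₂(H₁), m₂(H₂)}. -/
open SimpleGraph

/-- The 2-density of a subgraph `A` of an ambient graph `G`: the supremum of
`(e(B) - 1)/(v(B) - 2)` over all subgraphs `B ≤ A` with at least two edges. -/
noncomputable def twoDensitySub {V : Type*} [Fintype V] {G : SimpleGraph V}
    (A : G.Subgraph) : ℝ :=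
  sSup {x : ℝ | ∃ B : G.Subgraph, B ≤ A ∧ 2 ≤ B.edgeSet.ncard ∧
    x = ((B.edgeSet.ncard : ℝ) - 1) / ((B.verts.ncard : ℝ) - 2)}

/-- A connected simple graph on a finite vertex type has at least `card V - 1` edges. -/
private lemma card_le_edges_aux {V : Type*} [Fintype V] :
    ∀ n (G : SimpleGraph V), G.edgeSet.ncard = n → G.Connected →
      Fintype.card V ≤ n + 1 := by
  classical
  intro n
  induction n using Nat.strong_induction_on with
  | _ n ih =>
  intro G hn hG
  by_cases hac : G.IsAcyclic
  · have ht : G.IsTree := ⟨hG, hac⟩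
    have : Fintype G.edgeSet := G.edgeSet.toFinite.fintype
    have h2 := ht.card_edgeFinset
    have h3 : G.edgeFinset.card = G.edgeSet.ncard := by
      rw [Set.ncard_eq_toFinset_card']
      exact congrArg Finset.card (Finset.ext fun e => by simp)
    omega
  · rw [isAcyclic_iff_forall_edge_isBridge] at hac
    push_neg at hac
    obtain ⟨e, he, hbr⟩ := hac
    revert he hbr
    induction e using Sym2.ind with
    | _ u v =>
    intro he hbr
    rw [SimpleGraph.mem_edgeSet] at he
    rw [isBridge_iff] at hbr
    push_neg at hbr
    have hr := hbr
    set G' := G \ SimpleGraph.fromEdgeSet {s(u,v)} with hG'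
    have hpre : G'.Preconnected := by
      intro a b
      obtain ⟨p⟩ := hG.preconnected a b
      induction p with
      | nil => exact Reachable.refl _
      | @cons x y z hxy p ihp =>
        refine Reachable.trans ?_ ihp
        by_cases hxyuv : s(x, y) = s(u, v)
        · rw [Sym2.eq_iff] at hxyuv
          rcases hxyuv with ⟨rfl, rfl⟩ | ⟨rfl, rfl⟩
          · exact hr
          · exact hr.symm
        · refine SimpleGraph.Adj.reachable ?_
          rw [hG', SimpleGraph.sdiff_adj]
          exact ⟨hxy, by simp [SimpleGraph.fromEdgeSet_adj, hxyuv]⟩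
    have hG'c : G'.Connected := by
      have := hG.nonempty
      exact ⟨hpre⟩
    have hedge : G'.edgeSet = G.edgeSet \ {s(u,v)} := by
      simp [hG', edgeSet_sdiff, edgeSet_fromEdgeSet, edgeSet_sdiff_sdiff_isDiag]
    have hmem : s(u,v) ∈ G.edgeSet := he
    have hpos : 1 ≤ n := by
      rw [← hn]
      have := Set.ncard_pos (s := G.edgeSet) G.edgeSet.toFinite
      exact this.mpr ⟨_, hmem⟩
    have hcard : G'.edgeSet.ncard = n - 1 := by
      rw [hedge, Set.ncard_diff_singleton_of_mem hmem, hn]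
    have := ih (n - 1) (by omega) G' hcard hG'c
    omega

/-- A connected subgraph has at least `verts - 1` edges. -/
private lemma subgraph_card_le {V : Type*} [Fintype V] {G : SimpleGraph V}
    (H : G.Subgraph) (h : H.Connected) : H.verts.ncard ≤ H.edgeSet.ncard + 1 := by
  classical
  have : Fintype H.verts := H.verts.toFinite.fintype
  have h1 := card_le_edges_aux _ H.coe rfl h.coe
  have h2 : H.edgeSet.ncard = H.coe.edgeSet.ncard := by
    rw [← SimpleGraph.Subgraph.image_coe_edgeSet_coe]
    exact (Set.ncard_image_of_injective _ (Sym2.map.injective Subtype.val_injective))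
  have h3 : Fintype.card H.verts = H.verts.ncard := by
    rw [← Nat.card_coe_set_eq, Nat.card_eq_fintype_card]
  omega

/-- One edge forces two vertices. -/
private lemma verts_two {V : Type*} {G : SimpleGraph V} (B : G.Subgraph)
    (h : 1 ≤ B.edgeSet.ncard) (hfin : B.verts.Finite) : 2 ≤ B.verts.ncard := by
  have hne : B.edgeSet.Nonempty := by
    rcases Set.eq_empty_or_nonempty B.edgeSet with h0 | h0
    · simp [h0] at h
    · exact h0
  obtain ⟨e, hee⟩ := hne
  revert hee
  induction e using Sym2.ind with
  | _ a b =>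
  intro hee
  rw [SimpleGraph.Subgraph.mem_edgeSet] at hee
  have hab : a ≠ b := hee.ne
  have := Set.one_lt_ncard hfin
  exact this.mpr ⟨a, hee.fst_mem, b, hee.snd_mem, hab⟩

/-- Two edges force three vertices. -/
private lemma verts_three {V : Type*} {G : SimpleGraph V} (B : G.Subgraph)
    (h : 2 ≤ B.edgeSet.ncard) (hfine : B.edgeSet.Finite) (hfin : B.verts.Finite) :
    3 ≤ B.verts.ncard := by
  obtain ⟨e, hee, f, hef, hne⟩ := (Set.one_lt_ncard hfine).mp (by omega)
  revert hee hne
  induction e using Sym2.ind with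
  | _ a b =>
  intro hee hne
  revert hef hne
  induction f using Sym2.ind with
  | _ c d =>
  intro hef hne
  rw [SimpleGraph.Subgraph.mem_edgeSet] at hee hef
  have hab : a ≠ b := hee.ne
  have hcd : c ≠ d := hef.ne
  have : ∃ x, B.Adj x c ∨ B.Adj x d → True := ⟨a, fun _ => trivial⟩
  have hx : c ∉ ({a, b} : Set V) ∨ d ∉ ({a, b} : Set V) := by
    by_contra hcon
    push_neg at hcon
    obtain ⟨hc, hd⟩ := hcon
    apply hne
    rcases hc with rfl | rfl
    · rcases hd with rfl | rfl
      · exact absurd rfl hcd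
      · rfl
    · rcases hd with rfl | rfl
      · exact Sym2.eq_swap
      · exact absurd rfl hcd
  rcases hx with hx | hx
  · have h3 : 2 < B.verts.ncard := by
      refine (Set.two_lt_ncard hfin).mpr ⟨a, hee.fst_mem, b, hee.snd_mem, c, hef.fst_mem,
        hab, ?_, ?_⟩
      · rintro rfl; exact hx (Or.inl rfl)
      · rintro rfl; exact hx (Or.inr rfl)
    omega
  · have h3 : 2 < B.verts.ncard := by
      refine (Set.two_lt_ncard hfin).mpr ⟨a, hee.fst_mem, b, hee.snd_mem, d, hef.snd_mem,
        hab, ?_, ?_⟩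
      · rintro rfl; exact hx (Or.inl rfl)
      · rintro rfl; exact hx (Or.inr rfl)
    omega

private lemma twoDensity_bddAbove {V : Type*} [Fintype V] {G : SimpleGraph V}
    (A : G.Subgraph) : BddAbove {x : ℝ | ∃ B : G.Subgraph, B ≤ A ∧ 2 ≤ B.edgeSet.ncard ∧
      x = ((B.edgeSet.ncard : ℝ) - 1) / ((B.verts.ncard : ℝ) - 2)} := by
  classical
  refine ⟨(Nat.card (Sym2 V) : ℝ), ?_⟩
  rintro x ⟨B, hBA, hBe, rfl⟩
  have hv3 : 3 ≤ B.verts.ncard := verts_three B hBe B.edgeSet.toFinite B.verts.toFinite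
  have hle : B.edgeSet.ncard ≤ Nat.card (Sym2 V) := by
    rw [← Set.ncard_univ]
    exact Set.ncard_le_ncard (Set.subset_univ _) Set.finite_univ
  have h1 : (1 : ℝ) ≤ (B.verts.ncard : ℝ) - 2 := by
    have : (3 : ℝ) ≤ (B.verts.ncard : ℝ) := by exact_mod_cast hv3
    linarith
  have h0 : (0 : ℝ) ≤ (B.edgeSet.ncard : ℝ) - 1 := by
    have : (2 : ℝ) ≤ (B.edgeSet.ncard : ℝ) := by exact_mod_cast hBe
    linarith
  calc ((B.edgeSet.ncard : ℝ) - 1) / ((B.verts.ncard : ℝ) - 2)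
      ≤ (B.edgeSet.ncard : ℝ) - 1 := div_le_self h0 h1
    _ ≤ (Nat.card (Sym2 V) : ℝ) := by
        have : (B.edgeSet.ncard : ℝ) ≤ (Nat.card (Sym2 V) : ℝ) := by exact_mod_cast hle
        linarith

/-- If `H₁` and `H₂` are connected graphs, each with at least 3 vertices and at least 2
edges, sharing exactly one vertex and with no edges between them, then
`m₂(H₁ ∪ H₂) ≤ max (m₂ H₁) (m₂ H₂)`. -/
theorem twoDensity_union_le_max {V : Type*} [Fintype V] {G : SimpleGraph V}
    (H₁ H₂ : G.Subgraph)
    (hc1 : H₁.Connected) (hc2 : H₂.Connected)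
    (hv1 : 3 ≤ H₁.verts.ncard) (hv2 : 3 ≤ H₂.verts.ncard)
    (he1 : 2 ≤ H₁.edgeSet.ncard) (he2 : 2 ≤ H₂.edgeSet.ncard)
    (hshared : (H₁.verts ∩ H₂.verts).ncard = 1)
    (hnoedges : ∀ a b : V, a ∈ H₁.verts \ H₂.verts → b ∈ H₂.verts \ H₁.verts →
      ¬ (H₁ ⊔ H₂).Adj a b) :
    twoDensitySub (H₁ ⊔ H₂) ≤ max (twoDensitySub H₁) (twoDensitySub H₂) := by
  classical
  set M := max (twoDensitySub H₁) (twoDensitySub H₂) with hMdef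
  -- M ≥ 1
  have hd1 : (1 : ℝ) ≤ twoDensitySub H₁ := by
    have hvle : H₁.verts.ncard ≤ H₁.edgeSet.ncard + 1 := subgraph_card_le H₁ hc1
    have hmem : ((H₁.edgeSet.ncard : ℝ) - 1) / ((H₁.verts.ncard : ℝ) - 2) ∈
        {x : ℝ | ∃ B : G.Subgraph, B ≤ H₁ ∧ 2 ≤ B.edgeSet.ncard ∧
          x = ((B.edgeSet.ncard : ℝ) - 1) / ((B.verts.ncard : ℝ) - 2)} :=
      ⟨H₁, le_refl _, he1, rfl⟩
    have hle := le_csSup (twoDensity_bddAbove H₁) hmem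
    refine le_trans ?_ hle
    rw [le_div_iff₀]
    · have h1 : (H₁.verts.ncard : ℝ) ≤ (H₁.edgeSet.ncard : ℝ) + 1 := by exact_mod_cast hvle
      linarith
    · have : (3 : ℝ) ≤ (H₁.verts.ncard : ℝ) := by exact_mod_cast hv1
      linarith
  have hM1 : (1 : ℝ) ≤ M := le_trans hd1 (le_max_left _ _)
  have hM0 : (0 : ℝ) ≤ M := by linarith
  apply Real.sSup_le _ hM0
  rintro x ⟨B, hB, hBe, rfl⟩
  set B₁ := B ⊓ H₁ with hB₁
  set B₂ := B ⊓ H₂ with hB₂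
  -- edge counts
  have hdisj : Disjoint H₁.edgeSet H₂.edgeSet := by
    rw [Set.disjoint_left]
    intro e he1' he2'
    revert he1' he2'
    induction e using Sym2.ind with
    | _ a b =>
    intro he1' he2'
    rw [SimpleGraph.Subgraph.mem_edgeSet] at he1' he2'
    obtain ⟨z, hz⟩ := Set.ncard_eq_one.mp hshared
    have ha : a ∈ H₁.verts ∩ H₂.verts := ⟨he1'.fst_mem, he2'.fst_mem⟩
    have hb : b ∈ H₁.verts ∩ H₂.verts := ⟨he1'.snd_mem, he2'.snd_mem⟩
    rw [hz] at ha hb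
    exact he1'.ne (ha.trans hb.symm)
  have hBsub : B.edgeSet ⊆ H₁.edgeSet ∪ H₂.edgeSet := by
    have := SimpleGraph.Subgraph.edgeSet_mono hB
    rwa [SimpleGraph.Subgraph.edgeSet_sup] at this
  have hBeq : B.edgeSet = B₁.edgeSet ∪ B₂.edgeSet := by
    rw [hB₁, hB₂, SimpleGraph.Subgraph.edgeSet_inf, SimpleGraph.Subgraph.edgeSet_inf,
      ← Set.inter_union_distrib_left]
    exact (Set.inter_eq_self_of_subset_left hBsub).symm
  have hedisj : Disjoint B₁.edgeSet B₂.edgeSet := by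
    refine Set.disjoint_of_subset ?_ ?_ hdisj
    · rw [hB₁, SimpleGraph.Subgraph.edgeSet_inf]; exact Set.inter_subset_right
    · rw [hB₂, SimpleGraph.Subgraph.edgeSet_inf]; exact Set.inter_subset_right
  have hecount : B.edgeSet.ncard = B₁.edgeSet.ncard + B₂.edgeSet.ncard := by
    rw [hBeq]
    exact Set.ncard_union_eq hedisj B₁.edgeSet.toFinite B₂.edgeSet.toFinite
  -- vertex counts
  have hVsub : B.verts ⊆ H₁.verts ∪ H₂.verts := by
    have := SimpleGraph.Subgraph.verts_mono hB
    rwa [SimpleGraph.Subgraph.verts_sup] at this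
  have hVeq : B.verts = B₁.verts ∪ B₂.verts := by
    rw [hB₁, hB₂, SimpleGraph.Subgraph.verts_inf, SimpleGraph.Subgraph.verts_inf,
      ← Set.inter_union_distrib_left]
    exact (Set.inter_eq_self_of_subset_left hVsub).symm
  have hVinter : (B₁.verts ∩ B₂.verts).ncard ≤ 1 := by
    rw [← hshared]
    refine Set.ncard_le_ncard ?_ (H₁.verts ∩ H₂.verts).toFinite
    rw [hB₁, hB₂, SimpleGraph.Subgraph.verts_inf, SimpleGraph.Subgraph.verts_inf]
    exact Set.inter_subset_inter Set.inter_subset_right Set.inter_subset_right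
  have hvcount : B₁.verts.ncard + B₂.verts.ncard ≤ B.verts.ncard + 1 := by
    have := Set.ncard_union_add_ncard_inter B₁.verts B₂.verts B₁.verts.toFinite
      B₂.verts.toFinite
    rw [← hVeq] at this
    omega
  have hv3 : 3 ≤ B.verts.ncard := verts_three B hBe B.edgeSet.toFinite B.verts.toFinite
  have hden : (0 : ℝ) < (B.verts.ncard : ℝ) - 2 := by
    have : (3 : ℝ) ≤ (B.verts.ncard : ℝ) := by exact_mod_cast hv3
    linarith
  rw [div_le_iff₀ hden]
  -- the per-side key bounds
  have key : ∀ (C H : G.Subgraph), C ≤ H → twoDensitySub H ≤ M → 2 ≤ C.edgeSet.ncard →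
      (C.edgeSet.ncard : ℝ) - 1 ≤ M * ((C.verts.ncard : ℝ) - 2) := by
    intro C H hCH hHM hCe
    have hCv : 3 ≤ C.verts.ncard := verts_three C hCe C.edgeSet.toFinite C.verts.toFinite
    have hCden : (0 : ℝ) < (C.verts.ncard : ℝ) - 2 := by
      have : (3 : ℝ) ≤ (C.verts.ncard : ℝ) := by exact_mod_cast hCv
      linarith
    have hmem : ((C.edgeSet.ncard : ℝ) - 1) / ((C.verts.ncard : ℝ) - 2) ∈
        {x : ℝ | ∃ B : G.Subgraph, B ≤ H ∧ 2 ≤ B.edgeSet.ncard ∧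
          x = ((B.edgeSet.ncard : ℝ) - 1) / ((B.verts.ncard : ℝ) - 2)} :=
      ⟨C, hCH, hCe, rfl⟩
    have := (le_csSup (twoDensity_bddAbove H) hmem).trans hHM
    rwa [div_le_iff₀ hCden] at this
  have keyw : ∀ (C H : G.Subgraph), C ≤ H → twoDensitySub H ≤ M → 1 ≤ C.edgeSet.ncard →
      (C.edgeSet.ncard : ℝ) - 1 ≤ M * ((C.verts.ncard : ℝ) - 2) := by
    intro C H hCH hHM hCe
    rcases Nat.lt_or_ge C.edgeSet.ncard 2 with hlt | hge
    · have he1' : C.edgeSet.ncard = 1 := by omega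
      have hv2' : 2 ≤ C.verts.ncard := verts_two C hCe C.verts.toFinite
      rw [he1']
      push_cast
      have : (0 : ℝ) ≤ (C.verts.ncard : ℝ) - 2 := by
        have : (2 : ℝ) ≤ (C.verts.ncard : ℝ) := by exact_mod_cast hv2'
        linarith
      have := mul_nonneg hM0 this
      linarith
    · exact key C H hCH hHM hge
  have hB₁le : B₁ ≤ H₁ := inf_le_right
  have hB₂le : B₂ ≤ H₂ := inf_le_right
  have hM₁ : twoDensitySub H₁ ≤ M := le_max_left _ _
  have hM₂ : twoDensitySub H₂ ≤ M := le_max_right _ _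
  rcases Nat.eq_zero_or_pos B₂.edgeSet.ncard with h20 | h2p
  · -- all edges in B₁
    have he : B.edgeSet.ncard = B₁.edgeSet.ncard := by omega
    have h1 := key B₁ H₁ hB₁le hM₁ (by omega)
    have hvle : B₁.verts.ncard ≤ B.verts.ncard := by
      refine Set.ncard_le_ncard ?_ B.verts.toFinite
      rw [hB₁, SimpleGraph.Subgraph.verts_inf]
      exact Set.inter_subset_left
    have hvler : ((B₁.verts.ncard : ℝ)) ≤ (B.verts.ncard : ℝ) := by exact_mod_cast hvle
    have : M * ((B₁.verts.ncard : ℝ) - 2) ≤ M * ((B.verts.ncard : ℝ) - 2) := by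
      apply mul_le_mul_of_nonneg_left _ hM0
      linarith
    rw [he]
    linarith
  rcases Nat.eq_zero_or_pos B₁.edgeSet.ncard with h10 | h1p
  · -- all edges in B₂
    have he : B.edgeSet.ncard = B₂.edgeSet.ncard := by omega
    have h1 := key B₂ H₂ hB₂le hM₂ (by omega)
    have hvle : B₂.verts.ncard ≤ B.verts.ncard := by
      refine Set.ncard_le_ncard ?_ B.verts.toFinite
      rw [hB₂, SimpleGraph.Subgraph.verts_inf]
      exact Set.inter_subset_left
    have hvler : ((B₂.verts.ncard : ℝ)) ≤ (B.verts.ncard : ℝ) := by exact_mod_cast hvle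
    have : M * ((B₂.verts.ncard : ℝ) - 2) ≤ M * ((B.verts.ncard : ℝ) - 2) := by
      apply mul_le_mul_of_nonneg_left _ hM0
      linarith
    rw [he]
    linarith
  · -- both sides have at least one edge
    have h1 := keyw B₁ H₁ hB₁le hM₁ h1p
    have h2 := keyw B₂ H₂ hB₂le hM₂ h2p
    have hvr : (B₁.verts.ncard : ℝ) + (B₂.verts.ncard : ℝ) ≤ (B.verts.ncard : ℝ) + 1 := by
      exact_mod_cast hvcount
    have her : (B.edgeSet.ncard : ℝ) = (B₁.edgeSet.ncard : ℝ) + (B₂.edgeSet.ncard : ℝ) := by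
      exact_mod_cast hecount
    have hsum : M * ((B₁.verts.ncard : ℝ) - 2) + M * ((B₂.verts.ncard : ℝ) - 2) + M
        ≤ M * ((B.verts.ncard : ℝ) - 2) := by
      have h3 : ((B₁.verts.ncard : ℝ) - 2) + ((B₂.verts.ncard : ℝ) - 2) + 1
          ≤ (B.verts.ncard : ℝ) - 2 := by linarith
      nlinarith [mul_le_mul_of_nonneg_left h3 hM0]
    linarith
end

section
/- Let ℓ ≥ 2 and let 𝓗 = (A ∪ B; E) be an ℓ-uniform hypergraph with |e ∩ A| = 1 and |e ∩ B| = ℓ−1 for every edge e. Suppose that for every A' ⊆ A and B' ⊆ B with |B'| ≤ (2ℓ−3)(|A'|−1), there is an edge intersecting A' and disjoint from B'. Then 𝓗 has a matching saturating A. -/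
open Finset

namespace HaxellPf

/-- digit-list measure: `∑ (Q-1-dⱼ)·Q^(N-j)` -/
def mu (Q N : ℕ) (l : List ℕ) : ℕ :=
  ∑ j ∈ Finset.range l.length, (Q - 1 - l.getD j 0) * Q ^ (N - j)

lemma tele (Q N : ℕ) (hQ : 1 ≤ Q) :
    ∀ t s, s ≤ t → t ≤ N + 1 →
      (∑ j ∈ Finset.Ico s t, (Q - 1) * Q ^ (N - j)) + Q ^ (N + 1 - t) = Q ^ (N + 1 - s) := by
  intro t
  induction t with
  | zero => intro s hs _; interval_cases s; simp
  | succ t ih =>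
      intro s hs ht
      rcases Nat.eq_or_lt_of_le hs with rfl | hlt
      · simp
      · have hst : s ≤ t := Nat.lt_succ_iff.mp hlt
        rw [Finset.sum_Ico_succ_top hst]
        have h1 : N + 1 - (t + 1) = N - t := by omega
        have h2 : N + 1 - t = (N - t) + 1 := by omega
        have := ih s hst (by omega)
        rw [h1]
        have : (Q - 1) * Q ^ (N - t) + Q ^ (N - t) = Q ^ (N + 1 - t) := by
          rw [h2, pow_succ]
          have : (Q - 1) * Q ^ (N - t) + Q ^ (N - t) = ((Q - 1) + 1) * Q ^ (N - t) := by ring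
          rw [this, Nat.sub_add_cancel hQ, mul_comm]
        omega

lemma mu_split (Q N : ℕ) (P L : List ℕ) :
    mu Q N (P ++ L) = mu Q N P
      + ∑ j ∈ Finset.range L.length, (Q - 1 - L.getD j 0) * Q ^ (N - (P.length + j)) := by
  unfold mu
  rw [List.length_append]
  rw [Finset.range_eq_Ico, ← Finset.sum_Ico_consecutive _ (Nat.zero_le P.length)
    (Nat.le_add_right _ _)]
  congr 1
  · rw [← Finset.range_eq_Ico]
    apply Finset.sum_congr rfl
    intro j hj
    rw [List.getD_append _ _ _ _ (Finset.mem_range.mp hj)]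
  · rw [Finset.sum_Ico_eq_sum_range]
    simp only [Nat.add_sub_cancel_left]
    apply Finset.sum_congr rfl
    intro j hj
    rw [List.getD_append_right _ _ _ _ (Nat.le_add_right _ _), Nat.add_sub_cancel_left]

lemma mu_append_single (Q N : ℕ) (l : List ℕ) (k : ℕ) :
    mu Q N (l ++ [k]) = mu Q N l + (Q - 1 - k) * Q ^ (N - l.length) := by
  rw [mu_split]; simp

lemma mu_growth (Q N : ℕ) (l : List ℕ) (k : ℕ) (hk : k ≤ Q - 2) (hQ : 2 ≤ Q) :
    mu Q N l < mu Q N (l ++ [k]) := by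
  rw [mu_append_single]
  have h1 : 1 ≤ (Q - 1 - k) := by omega
  have h2 : 1 ≤ Q ^ (N - l.length) := Nat.one_le_pow _ _ (by omega)
  nlinarith

lemma mu_bound (Q N : ℕ) (hQ : 2 ≤ Q) (l : List ℕ) (hlen : l.length ≤ N + 1) :
    mu Q N l ≤ Q ^ (N + 1) := by
  have h1 : mu Q N l ≤ ∑ j ∈ Finset.range l.length, (Q - 1) * Q ^ (N - j) := by
    apply Finset.sum_le_sum
    intro j _
    exact Nat.mul_le_mul_right _ (by omega)
  have h2 := tele Q N (by omega) l.length 0 (Nat.zero_le _) hlen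
  rw [Finset.range_eq_Ico] at h1
  simp only [Nat.sub_zero] at h2
  omega

lemma mu_swap (Q N : ℕ) (hQ : 2 ≤ Q) (P R : List ℕ) (k k' : ℕ)
    (hk : k ≤ Q - 1) (hk' : k' < k)
    (hlen : P.length + 1 + R.length ≤ N + 1) :
    mu Q N (P ++ k :: R) < mu Q N (P ++ [k']) := by
  rw [mu_append_single, mu_split]
  have hsplit : ∀ j, ((k :: R).getD j 0) = if j = 0 then k else R.getD (j-1) 0 := by
    intro j; cases j with
    | zero => rfl
    | succ j => simp [List.getD_cons_succ]
  have hlen2 : (k :: R).length = R.length + 1 := by simp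
  rw [hlen2, Finset.sum_range_succ']
  simp only [List.getD_cons_succ, List.getD_cons_zero, Nat.add_zero]
  -- tail sum bound
  have htail : ∑ j ∈ Finset.range R.length, (Q - 1 - R.getD j 0) * Q ^ (N - (P.length + (j+1)))
      < Q ^ (N - P.length) := by
    have h1 : ∑ j ∈ Finset.range R.length, (Q - 1 - R.getD j 0) * Q ^ (N - (P.length + (j+1)))
        ≤ ∑ j ∈ Finset.range R.length, (Q - 1) * Q ^ (N - (P.length + (j+1))) := by
      apply Finset.sum_le_sum; intro j _
      exact Nat.mul_le_mul_right _ (by omega)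
    have h2 : ∑ j ∈ Finset.range R.length, (Q - 1) * Q ^ (N - (P.length + (j+1)))
        = ∑ j ∈ Finset.Ico (P.length + 1) (P.length + 1 + R.length), (Q - 1) * Q ^ (N - j) := by
      rw [Finset.sum_Ico_eq_sum_range]
      simp only [Nat.add_sub_cancel_left]
      apply Finset.sum_congr rfl
      intro j _; congr 2; omega
    have h3 := tele Q N (by omega) (P.length + 1 + R.length) (P.length + 1)
      (by omega) hlen
    have h4 : 1 ≤ Q ^ (N + 1 - (P.length + 1 + R.length)) := Nat.one_le_pow _ _ (by omega)
    have h5 : N + 1 - (P.length + 1) = N - P.length := by omega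
    rw [h5] at h3
    omega
  have hhead : (Q - 1 - k) * Q ^ (N - P.length) + Q ^ (N - P.length)
      ≤ (Q - 1 - k') * Q ^ (N - P.length) := by
    have : (Q - 1 - k) + 1 ≤ Q - 1 - k' := by omega
    calc (Q - 1 - k) * Q ^ (N - P.length) + Q ^ (N - P.length)
        = ((Q - 1 - k) + 1) * Q ^ (N - P.length) := by ring
      _ ≤ (Q - 1 - k') * Q ^ (N - P.length) := Nat.mul_le_mul_right _ this
  omega

variable {V : Type*} [DecidableEq V]

/-- set of "tree" matching edges of a structure sequence -/
def Tset (seq : List (Finset V × Finset (Finset V))) : Finset (Finset V) :=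
  seq.foldr (fun q acc => q.2 ∪ acc) ∅

/-- blocked B-vertices of a structure sequence -/
def Bp (B : Finset V) (seq : List (Finset V × Finset (Finset V))) : Finset V :=
  seq.foldr (fun q acc => q.1 ∩ B ∪ q.2.biUnion (· ∩ B) ∪ acc) ∅

/-- tree condition: each new edge hangs off an already present A-vertex -/
def TreeOK (av : Finset V → V) : List (Finset V × Finset (Finset V)) → Finset V → Prop
  | [], _ => True
  | q :: r, X => av q.1 ∈ X ∧ TreeOK av r (X ∪ q.2.image av)

@[simp] lemma Tset_nil : Tset ([] : List (Finset V × Finset (Finset V))) = ∅ := rfl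

@[simp] lemma Tset_cons (q : Finset V × Finset (Finset V)) (r) :
    Tset (q :: r) = q.2 ∪ Tset r := rfl

lemma Tset_append (l₁ l₂ : List (Finset V × Finset (Finset V))) :
    Tset (l₁ ++ l₂) = Tset l₁ ∪ Tset l₂ := by
  induction l₁ with
  | nil => simp
  | cons q r ih => simp [ih, Finset.union_assoc]

lemma mem_Tset {f : Finset V} {seq : List (Finset V × Finset (Finset V))} :
    f ∈ Tset seq ↔ ∃ q ∈ seq, f ∈ q.2 := by
  induction seq with
  | nil => simp
  | cons q r ih => simp [ih]

@[simp] lemma Bp_nil (B : Finset V) : Bp B ([] : List (Finset V × Finset (Finset V))) = ∅ := rfl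

@[simp] lemma Bp_cons (B : Finset V) (q : Finset V × Finset (Finset V)) (r) :
    Bp B (q :: r) = q.1 ∩ B ∪ q.2.biUnion (· ∩ B) ∪ Bp B r := rfl

lemma Bp_subset_B (B : Finset V) (seq : List (Finset V × Finset (Finset V))) :
    Bp B seq ⊆ B := by
  induction seq with
  | nil => simp
  | cons q r ih =>
      rw [Bp_cons]
      intro v hv
      rcases Finset.mem_union.mp hv with hv | hv
      · rcases Finset.mem_union.mp hv with hv | hv
        · exact (Finset.mem_inter.mp hv).2
        · rcases Finset.mem_biUnion.mp hv with ⟨g, _, hg⟩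
          exact (Finset.mem_inter.mp hg).2
      · exact ih hv

lemma sB_subset_Bp {B : Finset V} {seq : List (Finset V × Finset (Finset V))}
    {q : Finset V × Finset (Finset V)} (hq : q ∈ seq) : q.1 ∩ B ⊆ Bp B seq := by
  induction seq with
  | nil => simp at hq
  | cons p r ih =>
      rw [Bp_cons]
      rcases List.mem_cons.mp hq with rfl | hq
      · intro v hv; exact Finset.mem_union_left _ (Finset.mem_union_left _ hv)
      · intro v hv; exact Finset.mem_union_right _ (ih hq hv)

lemma fB_subset_Bp {B : Finset V} {seq : List (Finset V × Finset (Finset V))}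
    {f : Finset V} (hf : f ∈ Tset seq) : f ∩ B ⊆ Bp B seq := by
  induction seq with
  | nil => simp at hf
  | cons p r ih =>
      rw [Bp_cons]
      rcases Finset.mem_union.mp (by simpa using hf) with hf | hf
      · intro v hv
        exact Finset.mem_union_left _ (Finset.mem_union_right _
          (Finset.mem_biUnion.mpr ⟨f, hf, hv⟩))
      · intro v hv; exact Finset.mem_union_right _ (ih hf hv)

lemma treeOK_append {av : Finset V → V} (l₁ l₂ : List (Finset V × Finset (Finset V))) :
    ∀ X : Finset V, TreeOK av (l₁ ++ l₂) X ↔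
      TreeOK av l₁ X ∧ TreeOK av l₂ (X ∪ (Tset l₁).image av) := by
  induction l₁ with
  | nil => intro X; simp [TreeOK]
  | cons q r ih =>
      intro X
      show (av q.1 ∈ X ∧ TreeOK av (r ++ l₂) (X ∪ q.2.image av)) ↔ _
      rw [ih]
      simp only [TreeOK, Tset_cons, Finset.image_union, Finset.union_assoc, and_assoc]

/-- Validity of a search state. -/
structure Valid (A B : Finset V) (E : Finset (Finset V)) (av : Finset V → V) (a₀ : V)
    (M : Finset (Finset V)) (seq : List (Finset V × Finset (Finset V))) : Prop where
  MsubE : M ⊆ E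
  Mdisj : ∀ e ∈ M, ∀ f ∈ M, e ≠ f → Disjoint e f
  a0A : a₀ ∈ A
  a0free : ∀ f ∈ M, a₀ ∉ f
  memE : ∀ q ∈ seq, q.1 ∈ E
  notM : ∀ q ∈ seq, q.1 ∉ M
  KsubM : ∀ q ∈ seq, q.2 ⊆ M
  Kne : ∀ q ∈ seq, q.2.Nonempty
  Khit : ∀ q ∈ seq, ∀ f ∈ q.2, (q.1 ∩ f ∩ B).Nonempty
  Sclean : ∀ q ∈ seq, ∀ f ∈ M, f ∉ q.2 → Disjoint (q.1 ∩ B) (f ∩ B)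
  Kdisj : seq.Pairwise (fun q r => Disjoint q.2 r.2)
  Sdisj : seq.Pairwise (fun q r => Disjoint (q.1 ∩ B) (r.1 ∩ B))
  tree : TreeOK av seq {a₀}

lemma Tset_subset_M {A B : Finset V} {E av a₀ M seq} (hV : Valid A B E av a₀ M seq) :
    Tset seq ⊆ M := by
  intro f hf
  rcases mem_Tset.mp hf with ⟨q, hq, hfq⟩
  exact hV.KsubM q hq hfq

lemma Tset_card_eq {seq : List (Finset V × Finset (Finset V))}
    (hKd : seq.Pairwise (fun q r => Disjoint q.2 r.2)) :
    (Tset seq).card = (seq.map (fun q => q.2.card)).sum := by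
  induction seq with
  | nil => simp
  | cons q r ih =>
      rw [Tset_cons, List.map_cons, List.sum_cons]
      have hd : Disjoint q.2 (Tset r) := by
        rw [Finset.disjoint_left]
        intro f hf hfr
        rcases mem_Tset.mp hfr with ⟨p, hp, hfp⟩
        have := (List.pairwise_cons.mp hKd).1 p hp
        exact (Finset.disjoint_left.mp this) hf hfp
      rw [Finset.card_union_of_disjoint hd, ih (List.pairwise_cons.mp hKd).2]

lemma length_le_Tcard {A B : Finset V} {E av a₀ M seq} (hV : Valid A B E av a₀ M seq) :
    seq.length ≤ (Tset seq).card := by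
  rw [Tset_card_eq hV.Kdisj]
  have : ∀ q ∈ seq, 1 ≤ q.2.card := fun q hq => Finset.card_pos.mpr (hV.Kne q hq)
  calc seq.length = (seq.map (fun q => q.2.card)).length := by simp
    _ ≤ (seq.map (fun q => q.2.card)).sum := by
        apply List.length_le_sum_of_one_le
        intro x hx
        rcases List.mem_map.mp hx with ⟨q, hq, rfl⟩
        exact this q hq

lemma card_Bp {B : Finset V} {E : Finset (Finset V)} {m : ℕ}
    (hE : ∀ e ∈ E, (e ∩ B).card = m + 1) :
    ∀ seq : List (Finset V × Finset (Finset V)),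
      (∀ q ∈ seq, q.1 ∈ E) → (∀ q ∈ seq, ∀ f ∈ q.2, f ∈ E) →
      (∀ q ∈ seq, q.2.Nonempty) →
      (∀ q ∈ seq, ∀ f ∈ q.2, (q.1 ∩ f ∩ B).Nonempty) →
      seq.Pairwise (fun q r => Disjoint q.2 r.2) →
      (Bp B seq).card ≤ (2 * m + 1) * (Tset seq).card := by
  intro seq
  induction seq with
  | nil => simp
  | cons q r ih =>
      intro h1 h2 h3 h4 h5
      rw [Bp_cons, Tset_cons]
      have hd : Disjoint q.2 (Tset r) := by
        rw [Finset.disjoint_left]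
        intro f hf hfr
        rcases mem_Tset.mp hfr with ⟨p, hp, hfp⟩
        exact (Finset.disjoint_left.mp ((List.pairwise_cons.mp h5).1 p hp)) hf hfp
      rw [Finset.card_union_of_disjoint hd]
      have hhead : (q.1 ∩ B ∪ q.2.biUnion (· ∩ B)).card ≤ (m + 1) + m * q.2.card := by
        have hsub : q.1 ∩ B ∪ q.2.biUnion (· ∩ B)
            ⊆ q.1 ∩ B ∪ q.2.biUnion (fun f => (f ∩ B) \ (q.1 ∩ B)) := by
          intro v hv
          rcases Finset.mem_union.mp hv with hv | hv
          · exact Finset.mem_union_left _ hv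
          · rcases Finset.mem_biUnion.mp hv with ⟨f, hf, hvf⟩
            by_cases hq : v ∈ q.1 ∩ B
            · exact Finset.mem_union_left _ hq
            · exact Finset.mem_union_right _
                (Finset.mem_biUnion.mpr ⟨f, hf, Finset.mem_sdiff.mpr ⟨hvf, hq⟩⟩)
        calc (q.1 ∩ B ∪ q.2.biUnion (· ∩ B)).card
            ≤ (q.1 ∩ B ∪ q.2.biUnion (fun f => (f ∩ B) \ (q.1 ∩ B))).card :=
              Finset.card_le_card hsub
          _ ≤ (q.1 ∩ B).card + (q.2.biUnion (fun f => (f ∩ B) \ (q.1 ∩ B))).card :=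
              Finset.card_union_le _ _
          _ ≤ (q.1 ∩ B).card + ∑ f ∈ q.2, ((f ∩ B) \ (q.1 ∩ B)).card :=
              Nat.add_le_add_left (Finset.card_biUnion_le) _
          _ ≤ (m + 1) + ∑ f ∈ q.2, m := by
              apply Nat.add_le_add
              · exact le_of_eq (hE q.1 (h1 q (List.mem_cons_self)))
              · apply Finset.sum_le_sum
                intro f hf
                have hcard : (f ∩ B).card = m + 1 :=
                  hE f (h2 q (List.mem_cons_self) f hf)
                have hne := h4 q (List.mem_cons_self) f hf
                rcases hne with ⟨w, hw⟩
                have hwf : w ∈ f ∩ B := by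
                  simp only [Finset.mem_inter] at hw ⊢; exact ⟨hw.1.2, hw.2⟩
                have hwq : w ∈ q.1 ∩ B := by
                  simp only [Finset.mem_inter] at hw ⊢; exact ⟨hw.1.1, hw.2⟩
                have : (f ∩ B) \ (q.1 ∩ B) ⊂ f ∩ B := by
                  refine Finset.ssubset_iff_of_subset (Finset.sdiff_subset) |>.mpr ?_
                  exact ⟨w, hwf, fun hc => (Finset.mem_sdiff.mp hc).2 hwq⟩
                have := Finset.card_lt_card this
                omega
          _ = (m + 1) + m * q.2.card := by rw [Finset.sum_const, smul_eq_mul, mul_comm]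
      have htail := ih (fun p hp => h1 p (List.mem_cons_of_mem q hp))
        (fun p hp => h2 p (List.mem_cons_of_mem q hp))
        (fun p hp => h3 p (List.mem_cons_of_mem q hp))
        (fun p hp => h4 p (List.mem_cons_of_mem q hp))
        (List.pairwise_cons.mp h5).2
      have hK1 : 1 ≤ q.2.card := Finset.card_pos.mpr (h3 q (List.mem_cons_self))
      calc (q.1 ∩ B ∪ q.2.biUnion (· ∩ B) ∪ Bp B r).card
          ≤ (q.1 ∩ B ∪ q.2.biUnion (· ∩ B)).card + (Bp B r).card := Finset.card_union_le _ _
        _ ≤ ((m + 1) + m * q.2.card) + (2 * m + 1) * (Tset r).card := by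
            exact Nat.add_le_add hhead htail
        _ ≤ (2 * m + 1) * q.2.card + (2 * m + 1) * (Tset r).card := by
            have : (m + 1) + m * q.2.card ≤ (2 * m + 1) * q.2.card := by nlinarith
            omega
        _ = (2 * m + 1) * (q.2.card + (Tset r).card) := by ring

section Main

variable {A B : Finset V} {E : Finset (Finset V)} {av : Finset V → V} {a₀ : V} {m : ℕ}

lemma av_mem_A (hE : ∀ e ∈ E, e ⊆ A ∪ B ∧ (e ∩ B).card = m + 1 ∧ e ∩ A = {av e})
    {e : Finset V} (he : e ∈ E) : av e ∈ e ∧ av e ∈ A := by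
  have h := (hE e he).2.2
  have : av e ∈ e ∩ A := h ▸ Finset.mem_singleton_self _
  exact ⟨(Finset.mem_inter.mp this).1, (Finset.mem_inter.mp this).2⟩

lemma eq_av_of_mem_A (hE : ∀ e ∈ E, e ⊆ A ∪ B ∧ (e ∩ B).card = m + 1 ∧ e ∩ A = {av e})
    {e : Finset V} (he : e ∈ E) {v : V} (hv : v ∈ e) (hvA : v ∈ A) : v = av e := by
  have h := (hE e he).2.2
  have : v ∈ e ∩ A := Finset.mem_inter.mpr ⟨hv, hvA⟩
  rw [h] at this
  exact Finset.mem_singleton.mp this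

lemma edge_disj (hE : ∀ e ∈ E, e ⊆ A ∪ B ∧ (e ∩ B).card = m + 1 ∧ e ∩ A = {av e})
    {e f : Finset V} (he : e ∈ E) (hf : f ∈ E) (hav : av e ∉ f)
    (hB : Disjoint (e ∩ B) (f ∩ B)) : Disjoint e f := by
  rw [Finset.disjoint_left]
  intro v hve hvf
  rcases Finset.mem_union.mp ((hE e he).1 hve) with hvA | hvB
  · exact hav ((eq_av_of_mem_A hE he hve hvA) ▸ hvf)
  · exact (Finset.disjoint_left.mp hB) (Finset.mem_inter.mpr ⟨hve, hvB⟩)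
      (Finset.mem_inter.mpr ⟨hvf, hvB⟩)

lemma eB_nonempty (hE : ∀ e ∈ E, e ⊆ A ∪ B ∧ (e ∩ B).card = m + 1 ∧ e ∩ A = {av e})
    {e : Finset V} (he : e ∈ E) : (e ∩ B).Nonempty := by
  rw [← Finset.card_pos, (hE e he).2.1]; omega

lemma aset_subset_A (hE : ∀ e ∈ E, e ⊆ A ∪ B ∧ (e ∩ B).card = m + 1 ∧ e ∩ A = {av e})
    {M seq} (hV : Valid A B E av a₀ M seq) :
    insert a₀ ((Tset seq).image av) ⊆ A := by
  intro v hv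
  rcases Finset.mem_insert.mp hv with rfl | hv
  · exact hV.a0A
  · rcases Finset.mem_image.mp hv with ⟨f, hf, rfl⟩
    exact (av_mem_A hE (hV.MsubE (Tset_subset_M hV hf))).2

lemma aset_card (hE : ∀ e ∈ E, e ⊆ A ∪ B ∧ (e ∩ B).card = m + 1 ∧ e ∩ A = {av e})
    {M seq} (hV : Valid A B E av a₀ M seq) :
    (insert a₀ ((Tset seq).image av)).card = (Tset seq).card + 1 := by
  have hinj : Set.InjOn av ↑(Tset seq) := by
    intro f hf g hg hfg
    by_contra hne
    have hfM := Tset_subset_M hV (by exact_mod_cast hf)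
    have hgM := Tset_subset_M hV (by exact_mod_cast hg)
    have hd := hV.Mdisj f hfM g hgM hne
    have h1 := (av_mem_A hE (hV.MsubE hfM)).1
    have h2 := (av_mem_A hE (hV.MsubE hgM)).1
    rw [hfg] at h1
    exact (Finset.disjoint_left.mp hd) h1 h2
  rw [Finset.card_insert_of_notMem, Finset.card_image_of_injOn hinj]
  intro hmem
  rcases Finset.mem_image.mp hmem with ⟨f, hf, hav⟩
  have hfM := Tset_subset_M hV hf
  exact hV.a0free f hfM (hav ▸ (av_mem_A hE (hV.MsubE hfM)).1)

/-- extending a valid sequence by one new element at the end -/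
lemma valid_append_single
    {M seq} (hV : Valid A B E av a₀ M seq) {s : Finset V} {K : Finset (Finset V)}
    (hsE : s ∈ E) (hsM : s ∉ M) (hKM : K ⊆ M) (hKne : K.Nonempty)
    (hKhit : ∀ f ∈ K, (s ∩ f ∩ B).Nonempty)
    (hsclean : ∀ f ∈ M, f ∉ K → Disjoint (s ∩ B) (f ∩ B))
    (hKd : ∀ q ∈ seq, Disjoint q.2 K)
    (hSd : ∀ q ∈ seq, Disjoint (q.1 ∩ B) (s ∩ B))
    (htree : av s ∈ insert a₀ ((Tset seq).image av)) :
    Valid A B E av a₀ M (seq ++ [(s, K)]) := by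
  constructor
  case MsubE => exact hV.MsubE
  case Mdisj => exact hV.Mdisj
  case a0A => exact hV.a0A
  case a0free => exact hV.a0free
  case memE =>
      intro q hq
      rcases List.mem_append.mp hq with hq | hq
      · exact hV.memE q hq
      · simp at hq; subst hq; exact hsE
  case notM =>
      intro q hq
      rcases List.mem_append.mp hq with hq | hq
      · exact hV.notM q hq
      · simp at hq; subst hq; exact hsM
  case KsubM =>
      intro q hq
      rcases List.mem_append.mp hq with hq | hq
      · exact hV.KsubM q hq
      · simp at hq; subst hq; exact hKM
  case Kne =>
      intro q hq
      rcases List.mem_append.mp hq with hq | hq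
      · exact hV.Kne q hq
      · simp at hq; subst hq; exact hKne
  case Khit =>
      intro q hq
      rcases List.mem_append.mp hq with hq | hq
      · exact hV.Khit q hq
      · simp at hq; subst hq; exact hKhit
  case Sclean =>
      intro q hq
      rcases List.mem_append.mp hq with hq | hq
      · exact hV.Sclean q hq
      · simp at hq; subst hq; exact hsclean
  case Kdisj =>
      rw [List.pairwise_append]
      refine ⟨hV.Kdisj, List.pairwise_singleton _ _, ?_⟩
      intro q hq p hp
      simp at hp; subst hp
      exact hKd q hq
  case Sdisj =>
      rw [List.pairwise_append]
      refine ⟨hV.Sdisj, List.pairwise_singleton _ _, ?_⟩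
      intro q hq p hp
      simp at hp; subst hp
      exact hSd q hq
  case tree =>
      rw [treeOK_append]
      refine ⟨hV.tree, ?_, trivial⟩
      show av s ∈ {a₀} ∪ (Tset seq).image av
      rwa [← Finset.insert_eq]

end Main

section Main2

variable {A B : Finset V} {E : Finset (Finset V)} {av : Finset V → V} {a₀ : V} {m : ℕ}

lemma tree_mid {M l₁ l₂} {q₀ : Finset V × Finset (Finset V)}
    (hV : Valid A B E av a₀ M (l₁ ++ q₀ :: l₂)) :
    av q₀.1 ∈ insert a₀ ((Tset l₁).image av) := by
  have := ((treeOK_append l₁ (q₀ :: l₂) {a₀}).mp hV.tree).2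
  rw [Finset.insert_eq]
  exact this.1

lemma valid_truncate_swap
    (hE : ∀ e ∈ E, e ⊆ A ∪ B ∧ (e ∩ B).card = m + 1 ∧ e ∩ A = {av e})
    {M : Finset (Finset V)} {l₁ l₂ : List (Finset V × Finset (Finset V))}
    {q₀ : Finset V × Finset (Finset V)} {x f₀ : Finset V}
    (hV : Valid A B E av a₀ M (l₁ ++ q₀ :: l₂))
    (hf₀ : f₀ ∈ q₀.2)
    (hxE : x ∈ E) (hxM : x ∉ M)
    (hxav : av x = av f₀)
    (hxclean : ∀ f ∈ M, Disjoint (x ∩ B) (f ∩ B))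
    (hxS : ∀ q ∈ l₁ ++ q₀ :: l₂, Disjoint (x ∩ B) (q.1 ∩ B)) :
    Valid A B E av a₀ (insert x (M.erase f₀)) l₁ := by
  have hq₀mem : q₀ ∈ l₁ ++ q₀ :: l₂ := List.mem_append.mpr (Or.inr (List.mem_cons_self))
  have hf₀M : f₀ ∈ M := hV.KsubM q₀ hq₀mem hf₀
  have hf₀E : f₀ ∈ E := hV.MsubE hf₀M
  have havf₀ : av f₀ ∈ f₀ := (av_mem_A hE hf₀E).1
  have ha₀x : a₀ ∉ x := by
    intro h
    have h1 : a₀ = av x := eq_av_of_mem_A hE hxE h hV.a0A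
    apply hV.a0free f₀ hf₀M
    rw [h1, hxav]; exact havf₀
  have hKd := List.pairwise_append.mp hV.Kdisj
  have hSd := List.pairwise_append.mp hV.Sdisj
  constructor
  case MsubE =>
      intro f hf
      rcases Finset.mem_insert.mp hf with rfl | hf
      · exact hxE
      · exact hV.MsubE (Finset.mem_of_mem_erase hf)
  case Mdisj =>
      have key : ∀ f ∈ M.erase f₀, Disjoint x f := by
        intro f hf
        have hfM := Finset.mem_of_mem_erase hf
        have hff₀ : f ≠ f₀ := Finset.ne_of_mem_erase hf
        have havnf : av x ∉ f := by
          intro hc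
          have hd := hV.Mdisj f hfM f₀ hf₀M hff₀
          have h2 : av x ∈ f₀ := by rw [hxav]; exact havf₀
          exact (Finset.disjoint_left.mp hd) hc h2
        exact edge_disj hE hxE (hV.MsubE hfM) havnf (hxclean f hfM)
      intro e he f hf hne
      rcases Finset.mem_insert.mp he with he | he <;>
        rcases Finset.mem_insert.mp hf with hf | hf
      · exact absurd (he.trans hf.symm) hne
      · rw [he]; exact key f hf
      · rw [hf]; exact (key e he).symm
      · exact hV.Mdisj e (Finset.mem_of_mem_erase he) f (Finset.mem_of_mem_erase hf) hne
  case a0A => exact hV.a0A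
  case a0free =>
      intro f hf
      rcases Finset.mem_insert.mp hf with rfl | hf
      · exact ha₀x
      · exact hV.a0free f (Finset.mem_of_mem_erase hf)
  case memE =>
      intro q hq; exact hV.memE q (List.mem_append.mpr (Or.inl hq))
  case notM =>
      intro q hq
      have hqmem : q ∈ l₁ ++ q₀ :: l₂ := List.mem_append.mpr (Or.inl hq)
      intro hc
      rcases Finset.mem_insert.mp hc with hqx | hqM
      · have hd := hxS q hqmem
        rcases eB_nonempty hE (hV.memE q hqmem) with ⟨w, hw⟩
        rw [← hqx] at hd
        exact (Finset.disjoint_left.mp hd) hw hw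
      · exact hV.notM q hqmem (Finset.mem_of_mem_erase hqM)
  case KsubM =>
      intro q hq f hf
      have hqmem : q ∈ l₁ ++ q₀ :: l₂ := List.mem_append.mpr (Or.inl hq)
      have hfM : f ∈ M := hV.KsubM q hqmem hf
      have hff₀ : f ≠ f₀ := by
        intro h; subst h
        exact (Finset.disjoint_left.mp (hKd.2.2 q hq q₀ (List.mem_cons_self))) hf hf₀
      exact Finset.mem_insert.mpr (Or.inr (Finset.mem_erase.mpr ⟨hff₀, hfM⟩))
  case Kne =>
      intro q hq; exact hV.Kne q (List.mem_append.mpr (Or.inl hq))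
  case Khit =>
      intro q hq; exact hV.Khit q (List.mem_append.mpr (Or.inl hq))
  case Sclean =>
      intro q hq f hf hfK
      have hqmem : q ∈ l₁ ++ q₀ :: l₂ := List.mem_append.mpr (Or.inl hq)
      rcases Finset.mem_insert.mp hf with rfl | hf
      · exact (hxS q hqmem).symm
      · exact hV.Sclean q hqmem f (Finset.mem_of_mem_erase hf) hfK
  case Kdisj => exact hKd.1
  case Sdisj => exact hSd.1
  case tree => exact ((treeOK_append l₁ (q₀ :: l₂) {a₀}).mp hV.tree).1

end Main2

section Main3

variable {A B : Finset V} {E : Finset (Finset V)} {av : Finset V → V} {a₀ : V} {m : ℕ}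

lemma success_insert (hE : ∀ e ∈ E, e ⊆ A ∪ B ∧ (e ∩ B).card = m + 1 ∧ e ∩ A = {av e})
    {M : Finset (Finset V)} {x : Finset V}
    (hV : Valid A B E av a₀ M ([] : List (Finset V × Finset (Finset V))) → True)
    (hMsubE : M ⊆ E) (hMdisj : ∀ e ∈ M, ∀ f ∈ M, e ≠ f → Disjoint e f)
    (ha0free : ∀ f ∈ M, a₀ ∉ f)
    (hxE : x ∈ E) (hxav : av x = a₀)
    (hxclean : ∀ f ∈ M, Disjoint (x ∩ B) (f ∩ B)) :
    ∃ M', M' ⊆ E ∧ (∀ e ∈ M', ∀ f ∈ M', e ≠ f → Disjoint e f) ∧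
      A ∩ M.biUnion id ⊆ M'.biUnion id ∧ a₀ ∈ M'.biUnion id := by
  have key : ∀ f ∈ M, Disjoint x f := by
    intro f hf
    have havnf : av x ∉ f := by rw [hxav]; exact ha0free f hf
    exact edge_disj hE hxE (hMsubE hf) havnf (hxclean f hf)
  refine ⟨insert x M, ?_, ?_, ?_, ?_⟩
  · intro f hf
    rcases Finset.mem_insert.mp hf with rfl | hf
    · exact hxE
    · exact hMsubE hf
  · intro e he f hf hne
    rcases Finset.mem_insert.mp he with he | he <;> rcases Finset.mem_insert.mp hf with hf | hf
    · exact absurd (he.trans hf.symm) hne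
    · rw [he]; exact key f hf
    · rw [hf]; exact (key e he).symm
    · exact hMdisj e he f hf hne
  · intro v hv
    rcases Finset.mem_biUnion.mp (Finset.mem_inter.mp hv).2 with ⟨g, hg, hvg⟩
    exact Finset.mem_biUnion.mpr ⟨g, Finset.mem_insert_of_mem hg, hvg⟩
  · exact Finset.mem_biUnion.mpr ⟨x, Finset.mem_insert_self _ _, hxav ▸ (av_mem_A hE hxE).1⟩

lemma cascade (hE : ∀ e ∈ E, e ⊆ A ∪ B ∧ (e ∩ B).card = m + 1 ∧ e ∩ A = {av e}) :
    ∀ (n : ℕ) (seq : List (Finset V × Finset (Finset V))) (M : Finset (Finset V)) (x : Finset V),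
      seq.length ≤ n →
      Valid A B E av a₀ M seq →
      x ∈ E → x ∉ M →
      av x ∈ insert a₀ ((Tset seq).image av) →
      (∀ f ∈ M, Disjoint (x ∩ B) (f ∩ B)) →
      (∀ q ∈ seq, Disjoint (x ∩ B) (q.1 ∩ B)) →
      (∃ M', M' ⊆ E ∧ (∀ e ∈ M', ∀ f ∈ M', e ≠ f → Disjoint e f) ∧
        A ∩ M.biUnion id ⊆ M'.biUnion id ∧ a₀ ∈ M'.biUnion id)
      ∨ (∃ (M₂ : Finset (Finset V)) (l₁ l₂ : List (Finset V × Finset (Finset V)))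
          (q₀ : Finset V × Finset (Finset V)) (K' : Finset (Finset V)),
          seq = l₁ ++ q₀ :: l₂ ∧ K'.card < q₀.2.card ∧
          Valid A B E av a₀ M₂ (l₁ ++ [(q₀.1, K')]) ∧
          A ∩ M₂.biUnion id = A ∩ M.biUnion id) := by
  intro n
  induction n with
  | zero =>
      intro seq M x hlen hV hxE hxM hxav hxclean hxS
      have hseq : seq = [] := List.length_eq_zero_iff.mp (Nat.le_zero.mp hlen)
      subst hseq
      rw [Tset_nil, Finset.image_empty] at hxav
      left
      have : av x = a₀ := by simpa using hxav
      exact success_insert hE (fun _ => trivial) hV.MsubE hV.Mdisj hV.a0free hxE this hxclean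
  | succ n ih =>
      intro seq M x hlen hV hxE hxM hxav hxclean hxS
      rcases Finset.mem_insert.mp hxav with hxa₀ | hxim
      · left
        exact success_insert hE (fun _ => trivial) hV.MsubE hV.Mdisj hV.a0free hxE hxa₀ hxclean
      · rcases Finset.mem_image.mp hxim with ⟨f₀, hf₀T, hf₀av⟩
        rcases mem_Tset.mp hf₀T with ⟨q₀, hq₀, hf₀K⟩
        rcases List.append_of_mem hq₀ with ⟨l₁, l₂, rfl⟩
        have hq₀mem : q₀ ∈ l₁ ++ q₀ :: l₂ :=
          List.mem_append.mpr (Or.inr (List.mem_cons_self))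
        have hf₀M : f₀ ∈ M := hV.KsubM q₀ hq₀mem hf₀K
        have hxavf : av x = av f₀ := hf₀av.symm
        have hV₂ : Valid A B E av a₀ (insert x (M.erase f₀)) l₁ :=
          valid_truncate_swap hE hV hf₀K hxE hxM hxavf hxclean hxS
        set M₂ := insert x (M.erase f₀) with hM₂
        have hcov : A ∩ M₂.biUnion id = A ∩ M.biUnion id := by
          ext v
          simp only [Finset.mem_inter, Finset.mem_biUnion, id_eq]
          constructor
          · rintro ⟨hvA, g, hg, hvg⟩
            refine ⟨hvA, ?_⟩
            rcases Finset.mem_insert.mp hg with hgx | hg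
            · have hvx : v ∈ x := by rw [← hgx]; exact hvg
              have hveq : v = av x := eq_av_of_mem_A hE hxE hvx hvA
              refine ⟨f₀, hf₀M, ?_⟩
              rw [hveq, hxavf]
              exact (av_mem_A hE (hV.MsubE hf₀M)).1
            · exact ⟨g, Finset.mem_of_mem_erase hg, hvg⟩
          · rintro ⟨hvA, g, hg, hvg⟩
            refine ⟨hvA, ?_⟩
            by_cases hgf : g = f₀
            · have hvf : v ∈ f₀ := by rw [← hgf]; exact hvg
              have hveq : v = av f₀ := eq_av_of_mem_A hE (hV.MsubE hf₀M) hvf hvA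
              refine ⟨x, Finset.mem_insert_self _ _, ?_⟩
              rw [hveq, ← hxavf]
              exact (av_mem_A hE hxE).1
            · exact ⟨g, Finset.mem_insert_of_mem (Finset.mem_erase.mpr ⟨hgf, hg⟩), hvg⟩
        have hq₀E : q₀.1 ∈ E := hV.memE q₀ hq₀mem
        have hq₀x : q₀.1 ≠ x := by
          intro h
          rcases eB_nonempty hE hq₀E with ⟨w, hw⟩
          have hd := hxS q₀ hq₀mem
          rw [← h] at hd
          exact (Finset.disjoint_right.mp hd) hw hw
        have hq₀M₂ : q₀.1 ∉ M₂ := by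
          intro h
          rcases Finset.mem_insert.mp h with h | h
          · exact hq₀x h
          · exact hV.notM q₀ hq₀mem (Finset.mem_of_mem_erase h)
        have hSd := List.pairwise_append.mp hV.Sdisj
        have hKd := List.pairwise_append.mp hV.Kdisj
        by_cases hK' : (q₀.2.erase f₀).Nonempty
        · -- swap with remainder: new last element (q₀.1, q₀.2.erase f₀)
          right
          refine ⟨M₂, l₁, l₂, q₀, q₀.2.erase f₀, rfl, Finset.card_erase_lt_of_mem hf₀K, ?_, hcov⟩
          apply valid_append_single hV₂ hq₀E hq₀M₂
          · -- K' ⊆ M₂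
            intro f hf
            have hff₀ : f ≠ f₀ := Finset.ne_of_mem_erase hf
            have hfM : f ∈ M := hV.KsubM q₀ hq₀mem (Finset.mem_of_mem_erase hf)
            exact Finset.mem_insert_of_mem (Finset.mem_erase.mpr ⟨hff₀, hfM⟩)
          · exact hK'
          · intro f hf
            exact hV.Khit q₀ hq₀mem f (Finset.mem_of_mem_erase hf)
          · -- Sclean
            intro f hf hfK
            rcases Finset.mem_insert.mp hf with rfl | hf
            · exact (hxS q₀ hq₀mem).symm
            · have hfM := Finset.mem_of_mem_erase hf
              have hfq₀ : f ∉ q₀.2 := by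
                intro hc
                exact hfK (Finset.mem_erase.mpr ⟨Finset.ne_of_mem_erase hf, hc⟩)
              exact hV.Sclean q₀ hq₀mem f hfM hfq₀
          · intro q hq
            exact Finset.disjoint_of_subset_right (Finset.erase_subset _ _)
              (hKd.2.2 q hq q₀ (List.mem_cons_self))
          · intro q hq
            exact hSd.2.2 q hq q₀ (List.mem_cons_self)
          · exact tree_mid hV
        · -- cascade: q₀.2 = {f₀}, recurse with x₂ := q₀.1
          have hq₀K : ∀ g ∈ q₀.2, g = f₀ := by
            intro g hg
            by_contra hne
            exact hK' ⟨g, Finset.mem_erase.mpr ⟨hne, hg⟩⟩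
          have hlen₁ : l₁.length ≤ n := by
            have := hlen
            simp only [List.length_append, List.length_cons] at this
            omega
          have hclean₂ : ∀ f ∈ M₂, Disjoint (q₀.1 ∩ B) (f ∩ B) := by
            intro f hf
            rcases Finset.mem_insert.mp hf with rfl | hf
            · exact (hxS q₀ hq₀mem).symm
            · have hfM := Finset.mem_of_mem_erase hf
              have hfq₀ : f ∉ q₀.2 := by
                intro hc
                exact Finset.ne_of_mem_erase hf (hq₀K f hc)
              exact hV.Sclean q₀ hq₀mem f hfM hfq₀
          have hS₂ : ∀ q ∈ l₁, Disjoint (q₀.1 ∩ B) (q.1 ∩ B) := by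
            intro q hq
            exact (hSd.2.2 q hq q₀ (List.mem_cons_self)).symm
          have htree₂ : av q₀.1 ∈ insert a₀ ((Tset l₁).image av) := tree_mid hV
          rcases ih l₁ M₂ q₀.1 hlen₁ hV₂ hq₀E hq₀M₂ htree₂ hclean₂ hS₂ with hL | hR
          · left
            rcases hL with ⟨M', h1, h2, h3, h4⟩
            refine ⟨M', h1, h2, ?_, h4⟩
            rw [← hcov]
            exact h3
          · right
            rcases hR with ⟨M₃, l₁', l₂', q₀', K'', hdec, hcard, hval, hcov₃⟩
            refine ⟨M₃, l₁', l₂' ++ q₀ :: l₂, q₀', K'', ?_, hcard, hval, ?_⟩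
            · rw [hdec]
              simp [List.append_assoc]
            · rw [hcov₃, hcov]

end Main3

section Main4

variable {A B : Finset V} {E : Finset (Finset V)} {av : Finset V → V} {a₀ : V} {m : ℕ}

lemma augment
    (hE : ∀ e ∈ E, e ⊆ A ∪ B ∧ (e ∩ B).card = m + 1 ∧ e ∩ A = {av e})
    (hcond : ∀ A' ⊆ A, ∀ B' ⊆ B, A'.Nonempty → B'.card ≤ (2 * m + 1) * (A'.card - 1) →
      ∃ e ∈ E, (e ∩ A').Nonempty ∧ Disjoint e B') :
    ∀ (n : ℕ) (M : Finset (Finset V)) (seq : List (Finset V × Finset (Finset V))),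
      Valid A B E av a₀ M seq →
      (E.card + 2) ^ (E.card + 1)
          - mu (E.card + 2) E.card (seq.map fun q => q.2.card) ≤ n →
      ∃ M', M' ⊆ E ∧ (∀ e ∈ M', ∀ f ∈ M', e ≠ f → Disjoint e f) ∧
        A ∩ M.biUnion id ⊆ M'.biUnion id ∧ a₀ ∈ M'.biUnion id := by
  intro n
  induction n using Nat.strong_induction_on with
  | _ n ih =>
  intro M seq hV hn
  set Q : ℕ := E.card + 2 with hQdef
  set N : ℕ := E.card with hNdef
  have hMcard : M.card ≤ E.card := Finset.card_le_card hV.MsubE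
  have hTcard : (Tset seq).card ≤ E.card :=
    le_trans (Finset.card_le_card (fun f hf => hV.MsubE (Tset_subset_M hV hf))) le_rfl
  have hlen : seq.length ≤ N := le_trans (length_le_Tcard hV) hTcard
  have hmuC : mu Q N (seq.map fun q => q.2.card) ≤ Q ^ (N + 1) :=
    mu_bound Q N (by omega) _ (by simpa using le_trans hlen (Nat.le_succ N))
  -- the query
  have hcount : (Bp B seq).card ≤ (2 * m + 1) * (Tset seq).card :=
    card_Bp (fun e he => (hE e he).2.1) seq hV.memE
      (fun q hq f hf => hV.MsubE (hV.KsubM q hq hf)) hV.Kne hV.Khit hV.Kdisj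
  have hacard := aset_card hE hV
  obtain ⟨e, heE, hne, hdisj⟩ :=
    hcond (insert a₀ ((Tset seq).image av)) (aset_subset_A hE hV) (Bp B seq)
      (Bp_subset_B B seq) ⟨a₀, Finset.mem_insert_self _ _⟩
      (by rw [hacard]; simpa using hcount)
  have haveA' : av e ∈ insert a₀ ((Tset seq).image av) := by
    rcases hne with ⟨v, hv⟩
    have hvA : v ∈ A := aset_subset_A hE hV (Finset.mem_inter.mp hv).2
    have : v = av e := eq_av_of_mem_A hE heE (Finset.mem_inter.mp hv).1 hvA
    rw [← this]
    exact (Finset.mem_inter.mp hv).2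
  have heBne : (e ∩ B).Nonempty := eB_nonempty hE heE
  have heM : e ∉ M := by
    intro hc
    rcases Finset.mem_insert.mp haveA' with h | h
    · exact hV.a0free e hc (by rw [← h]; exact (av_mem_A hE heE).1)
    · rcases Finset.mem_image.mp h with ⟨f, hfT, hfe⟩
      have hfM := Tset_subset_M hV hfT
      have hef : e = f := by
        by_contra hne'
        have hd := hV.Mdisj e hc f hfM hne'
        have h1 : av e ∈ e := (av_mem_A hE heE).1
        have h2 : av e ∈ f := by rw [← hfe]; exact (av_mem_A hE (hV.MsubE hfM)).1
        exact (Finset.disjoint_left.mp hd) h1 h2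
      rcases heBne with ⟨w, hw⟩
      have hwBp : w ∈ Bp B seq := fB_subset_Bp (hef ▸ hfT) hw
      exact (Finset.disjoint_left.mp hdisj) (Finset.mem_inter.mp hw).1 hwBp
  have heBp : ∀ f ∈ Tset seq, Disjoint (e ∩ B) (f ∩ B) := by
    intro f hfT
    rw [Finset.disjoint_left]
    intro v hv1 hv2
    exact (Finset.disjoint_left.mp hdisj) (Finset.mem_inter.mp hv1).1 (fB_subset_Bp hfT hv2)
  have heS : ∀ q ∈ seq, Disjoint (e ∩ B) (q.1 ∩ B) := by
    intro q hq
    rw [Finset.disjoint_left]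
    intro v hv1 hv2
    exact (Finset.disjoint_left.mp hdisj) (Finset.mem_inter.mp hv1).1 (sB_subset_Bp hq hv2)
  classical
  set K₀ : Finset (Finset V) :=
    M.filter (fun g => g ∉ Tset seq ∧ (e ∩ g ∩ B).Nonempty) with hK₀def
  by_cases hK₀ : K₀.Nonempty
  · -- growth step
    have hV' : Valid A B E av a₀ M (seq ++ [(e, K₀)]) := by
      apply valid_append_single hV heE heM (Finset.filter_subset _ _) hK₀
      · intro f hf
        exact ((Finset.mem_filter.mp hf).2).2
      · intro f hfM hfK
        by_cases hfT : f ∈ Tset seq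
        · exact heBp f hfT
        · have : ¬(e ∩ f ∩ B).Nonempty := by
            intro hc
            exact hfK (Finset.mem_filter.mpr ⟨hfM, hfT, hc⟩)
          rw [Finset.disjoint_left]
          intro v hv1 hv2
          exact this ⟨v, by
            simp only [Finset.mem_inter] at hv1 hv2 ⊢
            exact ⟨⟨hv1.1, hv2.1⟩, hv1.2⟩⟩
      · intro q hq
        rw [Finset.disjoint_left]
        intro g hg1 hg2
        exact ((Finset.mem_filter.mp hg2).2).1 (mem_Tset.mpr ⟨q, hq, hg1⟩)
      · intro q hq
        exact (heS q hq).symm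
      · exact haveA'
    have hK₀card : K₀.card ≤ Q - 2 := by
      have : K₀ ⊆ M := Finset.filter_subset _ _
      have := le_trans (Finset.card_le_card this) hMcard
      omega
    have hmugt : mu Q N (seq.map fun q => q.2.card)
        < mu Q N ((seq ++ [(e, K₀)]).map fun q => q.2.card) := by
      rw [List.map_append]
      exact mu_growth Q N _ K₀.card hK₀card (by omega)
    have hmuC' : mu Q N ((seq ++ [(e, K₀)]).map fun q => q.2.card) ≤ Q ^ (N + 1) := by
      apply mu_bound Q N (by omega)
      simp only [List.length_map, List.length_append, List.length_cons]
      simpa using Nat.add_le_add hlen (le_refl 1)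
    exact ih (Q ^ (N + 1) - mu Q N ((seq ++ [(e, K₀)]).map fun q => q.2.card))
      (by omega) M (seq ++ [(e, K₀)]) hV' le_rfl
  · -- clean edge: swap / finish via cascade
    have hclean : ∀ f ∈ M, Disjoint (e ∩ B) (f ∩ B) := by
      intro f hfM
      by_cases hfT : f ∈ Tset seq
      · exact heBp f hfT
      · have : ¬(e ∩ f ∩ B).Nonempty := by
          intro hc
          exact hK₀ ⟨f, Finset.mem_filter.mpr ⟨hfM, hfT, hc⟩⟩
        rw [Finset.disjoint_left]
        intro v hv1 hv2
        exact this ⟨v, by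
          simp only [Finset.mem_inter] at hv1 hv2 ⊢
          exact ⟨⟨hv1.1, hv2.1⟩, hv1.2⟩⟩
    rcases cascade hE seq.length seq M e le_rfl hV heE heM haveA' hclean heS with hL | hR
    · exact hL
    · rcases hR with ⟨M₂, l₁, l₂, q₀, K', hdec, hcard, hval, hcov⟩
      have hq₀seq : q₀ ∈ seq := by rw [hdec]; exact List.mem_append.mpr (Or.inr (List.mem_cons_self))
      have hkle : q₀.2.card ≤ Q - 1 := by
        have : q₀.2 ⊆ M := hV.KsubM q₀ hq₀seq
        have := le_trans (Finset.card_le_card this) hMcard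
        omega
      have hmugt : mu Q N (seq.map fun q => q.2.card)
          < mu Q N ((l₁ ++ [(q₀.1, K')]).map fun q => q.2.card) := by
        rw [hdec]
        rw [List.map_append, List.map_append, List.map_cons]
        apply mu_swap Q N (by omega) _ _ _ _ hkle hcard
        have : (l₁ ++ q₀ :: l₂).length ≤ N := by rw [← hdec]; exact hlen
        simp only [List.length_append, List.length_cons, List.length_map, List.length_nil] at this ⊢
        omega
      have hmuC' : mu Q N ((l₁ ++ [(q₀.1, K')]).map fun q => q.2.card) ≤ Q ^ (N + 1) := by
        apply mu_bound Q N (by omega)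
        have : (l₁ ++ q₀ :: l₂).length ≤ N := by rw [← hdec]; exact hlen
        simp only [List.length_append, List.length_cons, List.length_map, List.length_nil] at this ⊢
        omega
      have hres := ih (Q ^ (N + 1) - mu Q N ((l₁ ++ [(q₀.1, K')]).map fun q => q.2.card))
        (by omega) M₂ (l₁ ++ [(q₀.1, K')]) hval le_rfl
      rcases hres with ⟨M', h1, h2, h3, h4⟩
      refine ⟨M', h1, h2, ?_, h4⟩
      rw [← hcov]
      exact h3

end Main4

lemma saturate {A B : Finset V} {E : Finset (Finset V)} {av : Finset V → V} {m : ℕ}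
    (hE : ∀ e ∈ E, e ⊆ A ∪ B ∧ (e ∩ B).card = m + 1 ∧ e ∩ A = {av e})
    (hcond : ∀ A' ⊆ A, ∀ B' ⊆ B, A'.Nonempty → B'.card ≤ (2 * m + 1) * (A'.card - 1) →
      ∃ e ∈ E, (e ∩ A').Nonempty ∧ Disjoint e B') :
    ∀ (k : ℕ) (M : Finset (Finset V)), M ⊆ E →
      (∀ e ∈ M, ∀ f ∈ M, e ≠ f → Disjoint e f) →
      (A \ M.biUnion id).card ≤ k →
      ∃ M', M' ⊆ E ∧ (∀ e ∈ M', ∀ f ∈ M', e ≠ f → Disjoint e f) ∧ A ⊆ M'.biUnion id := by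
  intro k
  induction k with
  | zero =>
      intro M hME hMd hdef
      refine ⟨M, hME, hMd, ?_⟩
      have : A \ M.biUnion id = ∅ := Finset.card_eq_zero.mp (Nat.le_zero.mp hdef)
      rwa [Finset.sdiff_eq_empty_iff_subset] at this
  | succ k ihk =>
      intro M hME hMd hdef
      by_cases hA : A ⊆ M.biUnion id
      · exact ⟨M, hME, hMd, hA⟩
      · have hne : (A \ M.biUnion id).Nonempty := by
          rw [Finset.sdiff_nonempty]
          exact hA
        rcases hne with ⟨a₀, ha₀⟩
        have ha₀A : a₀ ∈ A := (Finset.mem_sdiff.mp ha₀).1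
        have ha₀M : a₀ ∉ M.biUnion id := (Finset.mem_sdiff.mp ha₀).2
        have hV : Valid A B E av a₀ M [] := by
          constructor
          case MsubE => exact hME
          case Mdisj => exact hMd
          case a0A => exact ha₀A
          case a0free =>
              intro f hf hc
              exact ha₀M (Finset.mem_biUnion.mpr ⟨f, hf, hc⟩)
          case memE => intro q hq; exact absurd hq List.not_mem_nil
          case notM => intro q hq; exact absurd hq List.not_mem_nil
          case KsubM => intro q hq; exact absurd hq List.not_mem_nil
          case Kne => intro q hq; exact absurd hq List.not_mem_nil
          case Khit => intro q hq; exact absurd hq List.not_mem_nil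
          case Sclean => intro q hq; exact absurd hq List.not_mem_nil
          case Kdisj => exact List.Pairwise.nil
          case Sdisj => exact List.Pairwise.nil
          case tree => trivial
        obtain ⟨M', h1, h2, h3, h4⟩ :=
          augment hE hcond ((E.card + 2) ^ (E.card + 1)) M [] hV (Nat.sub_le _ _)
        apply ihk M' h1 h2
        have hsub : A \ M'.biUnion id ⊆ (A \ M.biUnion id).erase a₀ := by
          intro v hv
          have hvA := (Finset.mem_sdiff.mp hv).1
          have hvM' := (Finset.mem_sdiff.mp hv).2
          refine Finset.mem_erase.mpr ⟨?_, Finset.mem_sdiff.mpr ⟨hvA, ?_⟩⟩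
          · intro hc; subst hc; exact hvM' h4
          · intro hc
            exact hvM' (h3 (Finset.mem_inter.mpr ⟨hvA, hc⟩))
        have := Finset.card_le_card hsub
        have := Finset.card_erase_lt_of_mem ha₀
        omega

end HaxellPf

/-- Haxell's hypergraph matching condition: let `𝓗` be an `ℓ`-uniform hypergraph on
`A ∪ B` in which every edge meets `A` in one vertex and `B` in `ℓ-1` vertices. If for
all `A' ⊆ A`, `B' ⊆ B` with `|B'| ≤ (2ℓ-3)(|A'|-1)` there is an edge intersecting `A'`
and disjoint from `B'`, then there is a matching saturating `A`. -/
theorem haxell_matching {V : Type*} [DecidableEq V] (ℓ : ℕ) (hℓ : 2 ≤ ℓ)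
    (A B : Finset V) (hAB : Disjoint A B)
    (E : Finset (Finset V))
    (hedge : ∀ e ∈ E, e ⊆ A ∪ B ∧ e.card = ℓ ∧ (e ∩ A).card = 1 ∧ (e ∩ B).card = ℓ - 1)
    (hcond : ∀ A' ⊆ A, ∀ B' ⊆ B,
      ((B'.card : ℤ) ≤ (2 * (ℓ : ℤ) - 3) * ((A'.card : ℤ) - 1)) →
      ∃ e ∈ E, (e ∩ A').Nonempty ∧ Disjoint (e : Finset V) B') :
    ∃ M ⊆ E, (∀ e ∈ M, ∀ f ∈ M, e ≠ f → Disjoint e f) ∧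
      ∀ a ∈ A, ∃ e ∈ M, a ∈ e := by
  classical
  rcases A.eq_empty_or_nonempty with rfl | ⟨a, haA⟩
  · exact ⟨∅, Finset.empty_subset _, by simp, by simp⟩
  obtain ⟨m, rfl⟩ : ∃ m, ℓ = m + 2 := ⟨ℓ - 2, by omega⟩
  set av : Finset V → V := fun s => if h : (s ∩ A).Nonempty then h.choose else a with havdef
  have hav : ∀ e ∈ E, e ∩ A = {av e} := by
    intro e he
    have hcard : (e ∩ A).card = 1 := (hedge e he).2.2.1
    have hne : (e ∩ A).Nonempty := Finset.card_pos.mp (by omega)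
    rcases Finset.card_eq_one.mp hcard with ⟨y, hy⟩
    have hchoose : hne.choose ∈ e ∩ A := hne.choose_spec
    have h5 : ∀ z ∈ e ∩ A, z = y := by
      intro z hz
      rw [hy] at hz
      exact Finset.mem_singleton.mp hz
    have hcy : hne.choose = y := h5 _ hchoose
    have : av e = y := by
      rw [havdef]
      simp only [dif_pos hne]
      exact hcy
    rw [hy, this]
  have hE : ∀ e ∈ E, e ⊆ A ∪ B ∧ (e ∩ B).card = m + 1 ∧ e ∩ A = {av e} := by
    intro e he
    refine ⟨(hedge e he).1, ?_, hav e he⟩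
    have := (hedge e he).2.2.2
    omega
  have hcondN : ∀ A' ⊆ A, ∀ B' ⊆ B, A'.Nonempty →
      B'.card ≤ (2 * m + 1) * (A'.card - 1) →
      ∃ e ∈ E, (e ∩ A').Nonempty ∧ Disjoint e B' := by
    intro A' hA' B' hB' hA'ne hle
    apply hcond A' hA' B' hB'
    have h1 : 1 ≤ A'.card := Finset.card_pos.mpr hA'ne
    have h2 : (B'.card : ℤ) ≤ ((2 * m + 1 : ℕ) : ℤ) * (((A'.card - 1 : ℕ) : ℤ)) := by
      exact_mod_cast hle
    have h3 : ((A'.card - 1 : ℕ) : ℤ) = (A'.card : ℤ) - 1 := by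
      push_cast [h1]
      ring
    rw [h3] at h2
    calc (B'.card : ℤ) ≤ ((2 * m + 1 : ℕ) : ℤ) * ((A'.card : ℤ) - 1) := h2
      _ = (2 * ((m : ℤ) + 2) - 3) * ((A'.card : ℤ) - 1) := by push_cast; ring
      _ = (2 * ((m + 2 : ℕ) : ℤ) - 3) * ((A'.card : ℤ) - 1) := by push_cast; ring
  obtain ⟨M', h1, h2, h3⟩ := HaxellPf.saturate hE hcondN A.card ∅
    (Finset.empty_subset _) (by simp) (by simp)
  refine ⟨M', h1, h2, ?_⟩
  intro x hx
  rcases Finset.mem_biUnion.mp (h3 hx) with ⟨e, he, hxe⟩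
  exact ⟨e, he, hxe⟩
end

section
/- Let k ≥ 2, t ∈ {2k-1, 2k}, and let F_abs be the R-absorber for a set R = {r₁, ..., r_t}. Then both F_abs and F_abs − R have a C_t-factor. -/
/-- `G` has a `C_t`-factor on the vertex set `A`: a permutation fixing everything
outside `A`, moving each vertex of `A` along an edge of `G`, all of whose orbits on `A`
have size exactly `t`. The orbits are then vertex-disjoint `t`-cycles covering `A`. -/
def HasCycleFactorOn {V : Type*} (G : SimpleGraph V) (A : Set V) (t : ℕ) : Prop :=
  ∃ σ : Equiv.Perm V,
    (∀ a ∈ A, σ a ∈ A ∧ G.Adj a (σ a) ∧ (σ ^ t) a = a ∧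
      ∀ i : ℕ, 0 < i → i < t → (σ ^ i) a ≠ a) ∧
    (∀ a, a ∉ A → σ a = a)

/-- `H` is a `(u, w)`-switcher (with respect to `C_t`-factors): `u, w ∈ H` and both
`H - u` and `H - w` have a `C_t`-factor. -/
def IsSwitcher {V : Type*} (G : SimpleGraph V) (t : ℕ) (H : Set V) (u w : V) : Prop :=
  u ∈ H ∧ w ∈ H ∧ u ≠ w ∧
    HasCycleFactorOn G (H \ {u}) t ∧ HasCycleFactorOn G (H \ {w}) t

lemma hasCycleFactorOn_empty {V : Type*} (G : SimpleGraph V) (t : ℕ) :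
    HasCycleFactorOn G (∅ : Set V) t :=
  ⟨1, fun a ha => absurd ha (Set.notMem_empty a), fun _ _ => rfl⟩

lemma hasCycleFactorOn_congr {V : Type*} {G : SimpleGraph V} {A B : Set V} {t : ℕ}
    (h : A = B) : HasCycleFactorOn G A t → HasCycleFactorOn G B t := by
  rw [h]; exact id

lemma hasCycleFactorOn_union {V : Type*} {G : SimpleGraph V} {A B : Set V} {t : ℕ}
    (hd : Disjoint A B) (hA : HasCycleFactorOn G A t) (hB : HasCycleFactorOn G B t) :
    HasCycleFactorOn G (A ∪ B) t := by
  obtain ⟨σ, hσ, hσ'⟩ := hA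
  obtain ⟨τ, hτ, hτ'⟩ := hB
  refine ⟨σ * τ, ?_, ?_⟩
  · have hτfix : ∀ a ∈ A, τ a = a := fun a ha =>
      hτ' a (fun hb => hd.ne_of_mem ha hb rfl)
    have hσfix : ∀ a ∈ B, σ (τ a) = τ a := fun a ha =>
      hσ' _ (fun hb => hd.ne_of_mem hb (hτ a ha).1 rfl)
    have hστA : ∀ a ∈ A, (σ * τ) a = σ a := by
      intro a ha
      rw [Equiv.Perm.mul_apply, hτfix a ha]
    have hστB : ∀ a ∈ B, (σ * τ) a = τ a := by
      intro a ha
      rw [Equiv.Perm.mul_apply, hσfix a ha]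
    have powA : ∀ n : ℕ, ∀ a ∈ A, ((σ * τ) ^ n) a = (σ ^ n) a := by
      intro n
      induction n with
      | zero => intro a _; simp
      | succ n ih =>
        intro a ha
        rw [pow_succ, pow_succ]
        simp only [Equiv.Perm.mul_apply]
        rw [hτfix a ha]
        exact ih (σ a) (hσ a ha).1
    have powB : ∀ n : ℕ, ∀ a ∈ B, ((σ * τ) ^ n) a = (τ ^ n) a := by
      intro n
      induction n with
      | zero => intro a _; simp
      | succ n ih =>
        intro a ha
        rw [pow_succ, pow_succ]
        simp only [Equiv.Perm.mul_apply]
        rw [hσfix a ha]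
        exact ih (τ a) (hτ a ha).1
    rintro a (ha | ha)
    · refine ⟨?_, ?_, ?_, ?_⟩
      · rw [hστA a ha]; exact Or.inl (hσ a ha).1
      · rw [hστA a ha]; exact (hσ a ha).2.1
      · rw [powA t a ha]; exact (hσ a ha).2.2.1
      · intro i hi hi'
        rw [powA i a ha]; exact (hσ a ha).2.2.2 i hi hi'
    · refine ⟨?_, ?_, ?_, ?_⟩
      · rw [hστB a ha]; exact Or.inr (hτ a ha).1
      · rw [hστB a ha]; exact (hτ a ha).2.1
      · rw [powB t a ha]; exact (hτ a ha).2.2.1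
      · intro i hi hi'
        rw [powB i a ha]; exact (hτ a ha).2.2.2 i hi hi'
  · intro a ha
    have haA : a ∉ A := fun h => ha (Or.inl h)
    have haB : a ∉ B := fun h => ha (Or.inr h)
    simp [Equiv.Perm.mul_apply, hτ' a haB, hσ' a haA]

lemma hasCycleFactorOn_biUnion {V : Type*} {G : SimpleGraph V} {t : ℕ}
    (A : ℕ → Set V) (n : ℕ)
    (hd : ∀ i < n, ∀ j < n, i ≠ j → Disjoint (A i) (A j))
    (h : ∀ i < n, HasCycleFactorOn G (A i) t) :
    HasCycleFactorOn G (⋃ i ∈ Finset.range n, A i) t := by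
  induction n with
  | zero => simpa using hasCycleFactorOn_empty G t
  | succ n ih =>
    have hU : (⋃ i ∈ Finset.range (n + 1), A i)
        = (⋃ i ∈ Finset.range n, A i) ∪ A n := by
      ext x
      simp only [Set.mem_iUnion, Finset.mem_range, Set.mem_union]
      constructor
      · rintro ⟨i, hi, hx⟩
        rcases Nat.lt_succ_iff_lt_or_eq.mp hi with h' | h'
        · exact Or.inl ⟨i, h', hx⟩
        · exact Or.inr (h' ▸ hx)
      · rintro (⟨i, hi, hx⟩ | hx)
        · exact ⟨i, Nat.lt_succ_of_lt hi, hx⟩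
        · exact ⟨n, Nat.lt_succ_self n, hx⟩
    rw [hU]
    refine hasCycleFactorOn_union ?_
      (ih (fun i hi j hj hij => hd i (Nat.lt_succ_of_lt hi) j (Nat.lt_succ_of_lt hj) hij)
        (fun i hi => h i (Nat.lt_succ_of_lt hi))) (h n (Nat.lt_succ_self n))
    refine Set.disjoint_left.mpr ?_
    intro x hx hxn
    obtain ⟨i, hi, hx⟩ : ∃ i, i < n ∧ x ∈ A i := by
      simpa [Set.mem_iUnion] using hx
    exact Set.disjoint_left.mp
      (hd i (Nat.lt_succ_of_lt hi) n (Nat.lt_succ_self n) hi.ne) hx hxn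

/-- Proposition 2.4(a): let `k ≥ 2`, `t ∈ {2k-1, 2k}` and let the `R`-absorber
`F_abs` (the whole graph `G`) consist of a `t`-cycle `s 0, ..., s (t-1)` together with
pairwise disjoint `(s i, r i)`-switchers covering all vertices. Then both `F_abs` and
`F_abs − R` have a `C_t`-factor, where `R = {r 0, ..., r (t-1)}`. -/
theorem absorber_two_factors {V : Type*} [Fintype V] (G : SimpleGraph V)
    (k t : ℕ) (hk : 2 ≤ k) (ht : t = 2 * k - 1 ∨ t = 2 * k)
    (s r : ℕ → V) (S : ℕ → Set V)
    (hcycle : ∀ i < t, G.Adj (s i) (s ((i + 1) % t)))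
    (hs : ∀ i < t, s i ∈ S i)
    (hdisj : ∀ i < t, ∀ j < t, i ≠ j → Disjoint (S i) (S j))
    (hcover : (Set.univ : Set V) = ⋃ i ∈ Finset.range t, S i)
    (hsw : ∀ i < t, IsSwitcher G t (S i) (s i) (r i))
    (hedges : ∀ a b : V, G.Adj a b →
      (∃ i < t, a ∈ S i ∧ b ∈ S i) ∨
      (∃ i < t, (a = s i ∧ b = s ((i + 1) % t)) ∨ (b = s i ∧ a = s ((i + 1) % t)))) :
    HasCycleFactorOn G Set.univ t ∧
      HasCycleFactorOn G (Set.univ \ {x | ∃ i < t, x = r i}) t := by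
  classical
  have ht3 : 3 ≤ t := by
    rcases ht with h | h <;> omega
  haveI : NeZero t := ⟨by omega⟩
  -- the s i are pairwise distinct for i, j < t
  have hs_inj : ∀ i < t, ∀ j < t, s i = s j → i = j := by
    intro i hi j hj hij
    by_contra hne
    exact Set.disjoint_left.mp (hdisj i hi j hj hne) (hs i hi) (hij ▸ hs j hj)
  -- the cycle set
  set C : Set V := {x | ∃ i < t, x = s i} with hC
  -- embedding Fin t ↪ V
  have hemb : Function.Injective (fun i : Fin t => s i.val) := by
    intro i j hij
    exact Fin.ext (hs_inj i.val i.isLt j.val j.isLt hij)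
  set f : Fin t ↪ V := ⟨fun i => s i.val, hemb⟩ with hf
  have hrange : Set.range f = C := by
    ext x
    simp only [Set.mem_range, hC, Set.mem_setOf_eq, hf]
    constructor
    · rintro ⟨i, rfl⟩; exact ⟨i.val, i.isLt, rfl⟩
    · rintro ⟨i, hi, rfl⟩; exact ⟨⟨i, hi⟩, rfl⟩
  set π : Equiv.Perm V := (Equiv.addRight (1 : Fin t)).viaFintypeEmbedding f with hπ
  have hπ_img : ∀ i : ℕ, ∀ hi : i < t, π (s i) = s ((i + 1) % t) := by
    intro i hi
    have : π (f ⟨i, hi⟩) = f (⟨i, hi⟩ + 1) :=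
      Equiv.Perm.viaFintypeEmbedding_apply_image _ f ⟨i, hi⟩
    simpa [hf, Fin.add_def] using this
  have hπ_pow : ∀ n : ℕ, ∀ i : ℕ, ∀ hi : i < t, (π ^ n) (s i) = s ((i + n) % t) := by
    intro n
    induction n with
    | zero => intro i hi; simp [Nat.mod_eq_of_lt hi]
    | succ n ih =>
      intro i hi
      rw [pow_succ, Equiv.Perm.mul_apply, hπ_img i hi,
        ih ((i + 1) % t) (Nat.mod_lt _ (by omega))]
      rw [Nat.mod_add_mod]
      have : i + 1 + n = i + (n + 1) := by omega
      rw [this]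
  have hπC : HasCycleFactorOn G C t := by
    refine ⟨π, ?_, ?_⟩
    · rintro a ⟨i, hi, rfl⟩
      refine ⟨?_, ?_, ?_, ?_⟩
      · rw [hπ_img i hi]; exact ⟨(i + 1) % t, Nat.mod_lt _ (by omega), rfl⟩
      · rw [hπ_img i hi]; exact hcycle i hi
      · rw [hπ_pow t i hi, Nat.add_mod_right, Nat.mod_eq_of_lt hi]
      · intro j hj hj'
        rw [hπ_pow j i hi]
        intro heq
        have h1 : (i + j) % t = i := hs_inj _ (Nat.mod_lt _ (by omega)) i hi heq
        have h2 : (i + j) % t = (i + 0) % t := by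
          rw [h1, Nat.add_zero, Nat.mod_eq_of_lt hi]
        have h3 : j ≡ 0 [MOD t] := Nat.ModEq.add_left_cancel' i h2
        have h4 : j % t = 0 := by simpa [Nat.ModEq] using h3
        rw [Nat.mod_eq_of_lt hj'] at h4
        omega
    · intro a ha
      refine Equiv.Perm.viaFintypeEmbedding_apply_notMem_range _ f ?_
      rw [hrange]; exact ha
  obtain ⟨part1, part2⟩ : HasCycleFactorOn G (C ∪ ⋃ i ∈ Finset.range t, (S i \ {s i})) t ∧
      HasCycleFactorOn G (⋃ i ∈ Finset.range t, (S i \ {r i})) t := by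
    constructor
    · refine hasCycleFactorOn_union ?_ hπC (hasCycleFactorOn_biUnion _ t ?_ ?_)
      · refine Set.disjoint_left.mpr ?_
        rintro x ⟨i, hi, rfl⟩ hx
        obtain ⟨j, hxj, hj, hne2⟩ : ∃ j, s i ∈ S j ∧ j < t ∧ ¬ s i = s j := by
          simpa [Set.mem_iUnion] using hx
        rcases eq_or_ne i j with rfl | hne
        · exact hne2 rfl
        · exact Set.disjoint_left.mp (hdisj i hi j hj hne) (hs i hi) hxj
      · intro i hi j hj hij
        exact (hdisj i hi j hj hij).mono Set.diff_subset Set.diff_subset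
      · intro i hi
        exact (hsw i hi).2.2.2.1
    · refine hasCycleFactorOn_biUnion _ t ?_ ?_
      · intro i hi j hj hij
        exact (hdisj i hi j hj hij).mono Set.diff_subset Set.diff_subset
      · intro i hi
        exact (hsw i hi).2.2.2.2
  constructor
  · refine hasCycleFactorOn_congr ?_ part1
    ext x
    simp only [Set.mem_union, Set.mem_iUnion, Finset.mem_range, Set.mem_univ, iff_true,
      hC, Set.mem_setOf_eq, Set.mem_diff, Set.mem_singleton_iff]
    have hx : x ∈ ⋃ i ∈ Finset.range t, S i := hcover ▸ Set.mem_univ x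
    obtain ⟨i, hi, hxi⟩ : ∃ i, i < t ∧ x ∈ S i := by
      simpa [Set.mem_iUnion] using hx
    rcases eq_or_ne x (s i) with rfl | hne
    · exact Or.inl ⟨i, hi, rfl⟩
    · exact Or.inr ⟨i, hi, hxi, hne⟩
  · refine hasCycleFactorOn_congr ?_ part2
    ext x
    simp only [Set.mem_iUnion, Finset.mem_range, Set.mem_diff, Set.mem_singleton_iff,
      Set.mem_univ, true_and, Set.mem_setOf_eq]
    constructor
    · rintro ⟨i, hi, hxi, hne⟩ ⟨j, hj, rfl⟩
      rcases eq_or_ne i j with rfl | hij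
      · exact hne rfl
      · exact Set.disjoint_left.mp (hdisj i hi j hj hij) hxi ((hsw j hj).2.1)
    · intro hx
      have hx' : x ∈ ⋃ i ∈ Finset.range t, S i := hcover ▸ Set.mem_univ x
      obtain ⟨i, hi, hxi⟩ : ∃ i, i < t ∧ x ∈ S i := by
        simpa [Set.mem_iUnion] using hx'
      exact ⟨i, hi, hxi, fun h => hx ⟨i, hi, h⟩⟩
end

section
/- Let a, b, c be natural numbers with b ≥ 1, c ≥ 1 and n ≥ 1. Then binom(n, b) · binom(a·b, c) ≤ e^{c+b} · binom(n·a, c), provided c ≥ b. -/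
/-- For `c ≤ m`, `m^c ≤ binom(m,c) · c^c`. -/
lemma pow_le_choose_mul_pow (m c : ℕ) (h : c ≤ m) :
    m ^ c ≤ m.choose c * c ^ c := by
  have key : m ^ c * c.factorial ≤ m.descFactorial c * c ^ c := by
    have h1 : m ^ c * c.factorial = ∏ i ∈ Finset.range c, (m * (c - i)) := by
      rw [Finset.prod_mul_distrib, Finset.prod_const, ← Nat.descFactorial_self,
        Nat.descFactorial_eq_prod_range]
      simp [mul_comm]
    have h2 : m.descFactorial c * c ^ c = ∏ i ∈ Finset.range c, ((m - i) * c) := by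
      rw [Finset.prod_mul_distrib, Finset.prod_const, Nat.descFactorial_eq_prod_range]
      simp
    rw [h1, h2]
    apply Finset.prod_le_prod'
    intro i hi
    have hic : i < c := Finset.mem_range.mp hi
    rw [Nat.mul_sub, Nat.sub_mul]
    exact Nat.sub_le_sub_left (by rw [mul_comm i c]; exact Nat.mul_le_mul_right i h) _
  rw [Nat.descFactorial_eq_factorial_mul_choose] at key
  have := Nat.factorial_pos c
  calc m ^ c = m ^ c * c.factorial / c.factorial := by
        rw [Nat.mul_div_cancel _ this]
    _ ≤ c.factorial * m.choose c * c ^ c / c.factorial := Nat.div_le_div_right key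
    _ = m.choose c * c ^ c := by
        rw [mul_assoc, Nat.mul_div_cancel_left _ this]

/-- Binomial estimate: for natural numbers `a, b, c, n` with `b, c, n ≥ 1` and `c ≥ b`,
`binom(n, b) · binom(a·b, c) ≤ e^{c+b} · binom(n·a, c)`. -/
theorem choose_mul_choose_le (a b c n : ℕ) (hb : 1 ≤ b) (hc : 1 ≤ c) (hn : 1 ≤ n)
    (hcb : b ≤ c) :
    (n.choose b : ℝ) * ((a * b).choose c : ℝ) ≤
      Real.exp ((c : ℝ) + (b : ℝ)) * ((n * a).choose c : ℝ) := by
  have hrhs : (0 : ℝ) ≤ Real.exp ((c : ℝ) + (b : ℝ)) * ((n * a).choose c : ℝ) :=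
    mul_nonneg (Real.exp_pos _).le (Nat.cast_nonneg _)
  rcases Nat.lt_or_ge n b with hnb | hbn
  · rw [Nat.choose_eq_zero_of_lt hnb]
    simpa using hrhs
  rcases Nat.eq_zero_or_pos a with rfl | ha
  · rw [Nat.zero_mul, Nat.choose_eq_zero_of_lt hc]
    simpa using hrhs
  rcases Nat.lt_or_ge (n * a) c with hna | hcna
  · have hab : a * b < c :=
      lt_of_le_of_lt (by rw [mul_comm n a]; exact Nat.mul_le_mul_left a hbn) hna
    rw [Nat.choose_eq_zero_of_lt hab]
    simpa using hrhs
  -- main case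
  have hB : (0 : ℝ) < (b.factorial : ℝ) := by exact_mod_cast Nat.factorial_pos b
  have hC : (0 : ℝ) < (c.factorial : ℝ) := by exact_mod_cast Nat.factorial_pos c
  have hcc : (0 : ℝ) < (c : ℝ) ^ c := by positivity
  have hbR : (0 : ℝ) ≤ (b : ℝ) := Nat.cast_nonneg b
  have hbn' : (b : ℝ) ≤ (n : ℝ) := by exact_mod_cast hbn
  have hbb : (b : ℝ) ^ b ≤ Real.exp b * b.factorial := by
    have := Real.pow_div_factorial_le_exp (x := (b : ℝ)) hbR b
    rw [div_le_iff₀ hB] at this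
    linarith [this]
  have hccf : (c : ℝ) ^ c ≤ Real.exp c * c.factorial := by
    have := Real.pow_div_factorial_le_exp (x := (c : ℝ)) (Nat.cast_nonneg c) c
    rw [div_le_iff₀ hC] at this
    linarith [this]
  have key : (n : ℝ) ^ b * (a : ℝ) ^ c * ((b : ℝ) ^ c * (c : ℝ) ^ c) ≤
      Real.exp ((c : ℝ) + (b : ℝ)) * ((n : ℝ) * (a : ℝ)) ^ c *
        ((b.factorial : ℝ) * (c.factorial : ℝ)) := by
    calc (n : ℝ) ^ b * (a : ℝ) ^ c * ((b : ℝ) ^ c * (c : ℝ) ^ c)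
        = (a : ℝ) ^ c * (c : ℝ) ^ c * ((n : ℝ) ^ b * ((b : ℝ) ^ b * (b : ℝ) ^ (c - b))) := by
          rw [← pow_add, Nat.add_sub_cancel' hcb]; ring
      _ ≤ (a : ℝ) ^ c * (c : ℝ) ^ c * ((n : ℝ) ^ b * ((b : ℝ) ^ b * (n : ℝ) ^ (c - b))) := by
          gcongr
      _ = (a : ℝ) ^ c * ((n : ℝ) ^ b * (n : ℝ) ^ (c - b)) * ((b : ℝ) ^ b * (c : ℝ) ^ c) := by
          ring
      _ = (a : ℝ) ^ c * (n : ℝ) ^ c * ((b : ℝ) ^ b * (c : ℝ) ^ c) := by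
          rw [← pow_add, Nat.add_sub_cancel' hcb]
      _ ≤ (a : ℝ) ^ c * (n : ℝ) ^ c *
          ((Real.exp b * b.factorial) * (Real.exp c * c.factorial)) := by
          have h1 : (0 : ℝ) ≤ (a : ℝ) ^ c * (n : ℝ) ^ c := by positivity
          apply mul_le_mul_of_nonneg_left _ h1
          exact mul_le_mul hbb hccf (by positivity) (by positivity)
      _ = Real.exp ((c : ℝ) + (b : ℝ)) * ((n : ℝ) * (a : ℝ)) ^ c *
          ((b.factorial : ℝ) * (c.factorial : ℝ)) := by
          rw [Real.exp_add, mul_pow]; ring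
  have h3 : ((n : ℝ) * (a : ℝ)) ^ c / (c : ℝ) ^ c ≤ ((n * a).choose c : ℝ) := by
    rw [div_le_iff₀ hcc]
    have := pow_le_choose_mul_pow (n * a) c hcna
    push_cast
    exact_mod_cast this
  calc (n.choose b : ℝ) * ((a * b).choose c : ℝ)
      ≤ ((n : ℝ) ^ b / b.factorial) * (((a : ℝ) * (b : ℝ)) ^ c / c.factorial) := by
        apply mul_le_mul
        · exact Nat.choose_le_pow_div b n
        · have := Nat.choose_le_pow_div (α := ℝ) c (a * b)
          push_cast at this
          exact this
        · exact Nat.cast_nonneg _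
        · positivity
    _ = ((n : ℝ) ^ b * (a : ℝ) ^ c * (b : ℝ) ^ c) / ((b.factorial : ℝ) * c.factorial) := by
        rw [mul_pow]; ring
    _ ≤ Real.exp ((c : ℝ) + (b : ℝ)) * (((n : ℝ) * (a : ℝ)) ^ c / (c : ℝ) ^ c) := by
        rw [← mul_div_assoc, div_le_div_iff₀ (by positivity) hcc]
        have heq : (n : ℝ) ^ b * (a : ℝ) ^ c * (b : ℝ) ^ c * (c : ℝ) ^ c
            = (n : ℝ) ^ b * (a : ℝ) ^ c * ((b : ℝ) ^ c * (c : ℝ) ^ c) := by ring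
        rw [heq]
        exact key
    _ ≤ Real.exp ((c : ℝ) + (b : ℝ)) * ((n * a).choose c : ℝ) := by
        apply mul_le_mul_of_nonneg_left h3 (Real.exp_pos _).le
end
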